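/- arXiv:2007.06708 — 7 statements merged into one kernel-verified Lean document; each statement's English description precedes it below -/
import Mathlib

section
/- Let M ∈ ℂ^{n×n} be Hermitian and let ẑ ∈ ℂ₁ⁿ be a local minimizer of the function z ↦ zᴴ M z over ℂ₁ⁿ. Define the real diagonal matrix Λ̂ = Re(ddiag(M ẑ ẑᴴ)) and Ŝ = M − Λ̂. Then: (1) Ŝ ẑ = 0; and (2) for every ż ∈ ℂⁿ with Re(ż_i · conj(ẑ_i)) = 0 for all i = 1,…,n, one has Re(żᴴ Ŝ ż) ≥ 0. (Paper's Lemma 1.) -/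
open Matrix Complex
open Topology

noncomputable section

/-- `certMat M z = M - Re(ddiag(M z zᴴ))`, the certificate matrix `Ŝ`. -/
def certMat {n : ℕ} (M : Matrix (Fin n) (Fin n) ℂ) (z : Fin n → ℂ) :
    Matrix (Fin n) (Fin n) ℂ :=
  M - Matrix.diagonal (fun i => (((M.mulVec z i) * star (z i)).re : ℂ))

lemma second_order {g g1 g2 : ℝ → ℝ} (h1 : ∀ t, HasDerivAt g (g1 t) t)
    (h2 : ∀ t, HasDerivAt g1 (g2 t) t) (hc : Continuous g2)
    (hmin : IsLocalMin g 0) : 0 ≤ g2 0 := by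
  by_contra h
  push_neg at h
  have hg10 : g1 0 = 0 := by
    have := hmin.deriv_eq_zero
    rwa [(h1 0).deriv] at this
  have hev : ∀ᶠ t in 𝓝 (0:ℝ), g2 t < 0 ∧ g 0 ≤ g t := by
    filter_upwards [(hc.tendsto 0).eventually (eventually_lt_nhds h), hmin] with t h1 h2
    exact ⟨h1, h2⟩
  obtain ⟨δ, hδ, hball⟩ := Metric.eventually_nhds_iff.mp hev
  set t0 : ℝ := δ/2 with ht0def
  have ht0 : 0 < t0 := by positivity
  have hmem : ∀ x ∈ Set.Icc (0:ℝ) t0, dist x (0:ℝ) < δ := by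
    intro x hx
    rw [Real.dist_eq, sub_zero, _root_.abs_of_nonneg hx.1]
    linarith [hx.2]
  have hanti1 : StrictAntiOn g1 (Set.Icc 0 t0) := by
    apply strictAntiOn_of_deriv_neg (convex_Icc 0 t0)
    · exact fun x hx => ((h2 x).continuousAt).continuousWithinAt
    · intro x hx
      rw [interior_Icc] at hx
      rw [(h2 x).deriv]
      exact (hball (hmem x (Set.mem_Icc_of_Ioo hx))).1
  have hanti : StrictAntiOn g (Set.Icc 0 t0) := by
    apply strictAntiOn_of_deriv_neg (convex_Icc 0 t0)
    · exact fun x hx => ((h1 x).continuousAt).continuousWithinAt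
    · intro x hx
      rw [interior_Icc] at hx
      rw [(h1 x).deriv]
      have := hanti1 (Set.left_mem_Icc.mpr ht0.le) (Set.mem_Icc_of_Ioo hx) hx.1
      linarith [hg10]
  have := hanti (Set.left_mem_Icc.mpr ht0.le) (Set.right_mem_Icc.mpr ht0.le) ht0
  have hge := (hball (hmem t0 (Set.right_mem_Icc.mpr ht0.le))).2
  linarith

lemma term_re (u v m : ℂ) (x y : ℝ) :
    ((starRingEnd ℂ) (u * Complex.exp (x*I)) * (m * (v * Complex.exp (y*I)))).re
     = ((starRingEnd ℂ) u * m * v).re * Real.cos (y - x)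
       - ((starRingEnd ℂ) u * m * v).im * Real.sin (y - x) := by
  have h : (starRingEnd ℂ) (u * Complex.exp (↑x*I)) * (m * (v * Complex.exp (↑y*I)))
      = ((starRingEnd ℂ) u * m * v) * Complex.exp (↑(y-x)*I) := by
    rw [_root_.map_mul, ← Complex.exp_conj, _root_.map_mul, Complex.conj_ofReal, Complex.conj_I]
    rw [show ((y - x : ℝ) : ℂ) * I = ↑y * I + ↑x * -I by push_cast; ring, Complex.exp_add]
    ring
  rw [h, Complex.mul_re, Complex.exp_ofReal_mul_I_re, Complex.exp_ofReal_mul_I_im]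

lemma aux {n : ℕ} (M : Matrix (Fin n) (Fin n) ℂ) (zhat : Fin n → ℂ)
    (hzhat : ∀ i, ‖zhat i‖ = 1)
    (hloc : ∃ ε > (0 : ℝ), ∀ z : Fin n → ℂ, (∀ i, ‖z i‖ = 1) →
      dist z zhat < ε → (star zhat ⬝ᵥ M.mulVec zhat).re ≤ (star z ⬝ᵥ M.mulVec z).re)
    (α : Fin n → ℝ) :
    (∑ j, ∑ k, ((starRingEnd ℂ) (zhat j) * M j k * zhat k).im * (α k - α j) = 0) ∧
    (∑ j, ∑ k, ((starRingEnd ℂ) (zhat j) * M j k * zhat k).re * (α k - α j)^2 ≤ 0) := by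
  obtain ⟨ε, hε, hmin⟩ := hloc
  set w : Fin n → Fin n → ℂ := fun j k => (starRingEnd ℂ) (zhat j) * M j k * zhat k with hw
  set c : ℝ → Fin n → ℂ := fun t j => zhat j * Complex.exp ((α j * t : ℝ) * Complex.I) with hcdef
  set g : ℝ → ℝ := fun t => ∑ j, ∑ k,
    ((w j k).re * Real.cos ((α k - α j) * t) - (w j k).im * Real.sin ((α k - α j) * t)) with hg
  set g1 : ℝ → ℝ := fun t => ∑ j, ∑ k,
    (-((w j k).re * (α k - α j)) * Real.sin ((α k - α j) * t)
      - ((w j k).im * (α k - α j)) * Real.cos ((α k - α j) * t)) with hg1def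
  set g2 : ℝ → ℝ := fun t => ∑ j, ∑ k,
    (-((w j k).re * (α k - α j)^2) * Real.cos ((α k - α j) * t)
      + ((w j k).im * (α k - α j)^2) * Real.sin ((α k - α j) * t)) with hg2def
  -- derivatives
  have hder : ∀ (θ A B : ℝ) (t : ℝ), HasDerivAt (fun s => A * Real.cos (θ * s) - B * Real.sin (θ * s))
      (-(A * θ) * Real.sin (θ * t) - (B * θ) * Real.cos (θ * t)) t := by
    intro θ A B t
    have hid : HasDerivAt (fun s : ℝ => θ * s) θ t := by
      simpa using (hasDerivAt_id t).const_mul θ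
    have hc : HasDerivAt (fun s => Real.cos (θ * s)) (-Real.sin (θ * t) * θ) t :=
      (Real.hasDerivAt_cos (θ * t)).comp t hid
    have hs : HasDerivAt (fun s => Real.sin (θ * s)) (Real.cos (θ * t) * θ) t :=
      (Real.hasDerivAt_sin (θ * t)).comp t hid
    have := (hc.const_mul A).fun_sub (hs.const_mul B)
    exact this.congr_deriv (by ring)
  have hg1 : ∀ t, HasDerivAt g (g1 t) t := by
    intro t
    apply HasDerivAt.fun_sum
    intro j _
    apply HasDerivAt.fun_sum
    intro k _
    exact hder _ _ _ t
  have hder' : ∀ (θ A B : ℝ) (t : ℝ), HasDerivAt (fun s => A * Real.sin (θ * s) - B * Real.cos (θ * s))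
      ((A * θ) * Real.cos (θ * t) + (B * θ) * Real.sin (θ * t)) t := by
    intro θ A B t
    have hid : HasDerivAt (fun s : ℝ => θ * s) θ t := by
      simpa using (hasDerivAt_id t).const_mul θ
    have hc : HasDerivAt (fun s => Real.cos (θ * s)) (-Real.sin (θ * t) * θ) t :=
      (Real.hasDerivAt_cos (θ * t)).comp t hid
    have hs : HasDerivAt (fun s => Real.sin (θ * s)) (Real.cos (θ * t) * θ) t :=
      (Real.hasDerivAt_sin (θ * t)).comp t hid
    have := (hs.const_mul A).fun_sub (hc.const_mul B)
    exact this.congr_deriv (by ring)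
  have hg2 : ∀ t, HasDerivAt g1 (g2 t) t := by
    intro t
    apply HasDerivAt.fun_sum
    intro j _
    apply HasDerivAt.fun_sum
    intro k _
    have := hder' (α k - α j) (-((w j k).re * (α k - α j))) ((w j k).im * (α k - α j)) t
    exact this.congr_deriv (by ring)
  have hcont2 : Continuous g2 := by
    apply continuous_finset_sum
    intro j _
    apply continuous_finset_sum
    intro k _
    fun_prop
  -- identity
  have hgt : ∀ t, (star (c t) ⬝ᵥ M.mulVec (c t)).re = g t := by
    intro t
    have : star (c t) ⬝ᵥ M.mulVec (c t) = ∑ j, ∑ k, (starRingEnd ℂ) (c t j) * (M j k * c t k) := by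
      simp [dotProduct, mulVec, Finset.mul_sum, Complex.star_def]
    rw [this, Complex.re_sum]
    apply Finset.sum_congr rfl
    intro j _
    rw [Complex.re_sum]
    apply Finset.sum_congr rfl
    intro k _
    have := term_re (zhat j) (zhat k) (M j k) (α j * t) (α k * t)
    simp only [hcdef]
    rw [this]
    rw [show α k * t - α j * t = (α k - α j) * t by ring]
  -- unit modulus along curve
  have hunit : ∀ t i, ‖c t i‖ = 1 := by
    intro t i
    simp [hcdef, Complex.norm_exp, hzhat]
  have hc0 : c 0 = zhat := by
    funext j
    simp [hcdef]
  -- local min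
  have hlm : IsLocalMin g 0 := by
    have hcont : Continuous c := by fun_prop
    have htd : Filter.Tendsto c (𝓝 0) (𝓝 zhat) := hc0 ▸ hcont.tendsto 0
    have hev := Metric.tendsto_nhds.mp htd ε hε
    filter_upwards [hev] with t ht
    have h1 := hmin (c t) (hunit t) ht
    calc g 0 = (star (c 0) ⬝ᵥ M.mulVec (c 0)).re := (hgt 0).symm
    _ = (star zhat ⬝ᵥ M.mulVec zhat).re := by rw [hc0]
    _ ≤ (star (c t) ⬝ᵥ M.mulVec (c t)).re := h1
    _ = g t := hgt t
  constructor
  · have hA : g1 0 = 0 := by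
      have := hlm.deriv_eq_zero
      rwa [(hg1 0).deriv] at this
    have : g1 0 = -∑ j, ∑ k, ((w j k).im * (α k - α j)) := by
      simp [hg1def, Finset.sum_neg_distrib]
    rw [this] at hA
    have := neg_eq_zero.mp hA
    simpa [hw] using this
  · have hB : 0 ≤ g2 0 := second_order hg1 hg2 hcont2 hlm
    have : g2 0 = -∑ j, ∑ k, ((w j k).re * (α k - α j)^2) := by
      simp [hg2def, Finset.sum_neg_distrib]
    rw [this] at hB
    have := neg_nonneg.mp hB
    simpa [hw] using this

/-- **Paper's Lemma 1.** If `ẑ ∈ ℂ₁ⁿ` is a local minimizer of `z ↦ zᴴ M z` over `ℂ₁ⁿ`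
(`M` Hermitian), then with `Λ̂ = Re(ddiag(M ẑ ẑᴴ))` and `Ŝ = M - Λ̂` one has `Ŝ ẑ = 0`,
and `Re(żᴴ Ŝ ż) ≥ 0` for every `ż` in the tangent space at `ẑ`. -/
theorem stmt0 {n : ℕ} (M : Matrix (Fin n) (Fin n) ℂ) (hM : M.IsHermitian)
    (zhat : Fin n → ℂ) (hzhat : ∀ i, ‖zhat i‖ = 1)
    (hloc : ∃ ε > (0 : ℝ), ∀ z : Fin n → ℂ, (∀ i, ‖z i‖ = 1) →
      dist z zhat < ε →
      (star zhat ⬝ᵥ M.mulVec zhat).re ≤ (star z ⬝ᵥ M.mulVec z).re) :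
    (certMat M zhat).mulVec zhat = 0 ∧
      ∀ zdot : Fin n → ℂ, (∀ i, (zdot i * star (zhat i)).re = 0) →
        0 ≤ (star zdot ⬝ᵥ (certMat M zhat).mulVec zdot).re := by
  set w : Fin n → Fin n → ℂ := fun j k => (starRingEnd ℂ) (zhat j) * M j k * zhat k with hw
  set lam : Fin n → ℝ := fun j => ((M.mulVec zhat j) * star (zhat j)).re with hlam
  set bet : Fin n → ℝ := fun j => ((M.mulVec zhat j) * star (zhat j)).im with hbet
  have hnorm : ∀ i, (starRingEnd ℂ) (zhat i) * zhat i = 1 := by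
    intro i
    rw [mul_comm, Complex.mul_conj]
    rw [Complex.normSq_eq_norm_sq, hzhat i]
    norm_num
  -- row and column sums of w
  have hrow : ∀ j, ∑ k, w j k = M.mulVec zhat j * (starRingEnd ℂ) (zhat j) := by
    intro j
    simp only [hw, Matrix.mulVec, dotProduct]
    rw [Finset.sum_mul]
    apply Finset.sum_congr rfl
    intro k _
    ring
  have hcol : ∀ k, ∑ j, w j k = (starRingEnd ℂ) (M.mulVec zhat k * (starRingEnd ℂ) (zhat k)) := by
    intro k
    have step : ∀ j, w j k = (starRingEnd ℂ) (M k j * zhat j * (starRingEnd ℂ) (zhat k)) := by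
      intro j
      simp only [hw]
      rw [← hM.apply j k]
      simp only [_root_.map_mul, Complex.star_def, Complex.conj_conj]
      ring
    simp_rw [step]
    rw [← map_sum]
    congr 1
    rw [Matrix.mulVec, dotProduct, Finset.sum_mul]
  have hrowre : ∀ j, ∑ k, (w j k).re = lam j := by
    intro j
    rw [← Complex.re_sum, hrow j]
    simp [hlam, Complex.star_def]
  have hrowim : ∀ j, ∑ k, (w j k).im = bet j := by
    intro j
    rw [← Complex.im_sum, hrow j]
    simp [hbet, Complex.star_def]
  have hcolre : ∀ k, ∑ j, (w j k).re = lam k := by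
    intro k
    rw [← Complex.re_sum, hcol k]
    simp [hlam, Complex.star_def]
  have hcolim : ∀ k, ∑ j, (w j k).im = -bet k := by
    intro k
    rw [← Complex.im_sum, hcol k]
    simp [hbet, Complex.star_def]
    ring
  -- consequences of aux
  have key1 : ∀ i, bet i = 0 := by
    intro i
    have h := (aux M zhat hzhat hloc (Pi.single i 1)).1
    set α : Fin n → ℝ := Pi.single i 1 with hα
    have hsingle : ∑ j, bet j * α j = bet i := by
      simp [hα, Pi.single_apply, mul_ite]
    have e1 : ∑ j, ∑ k, (w j k).im * (α k - α j)
        = (∑ k, -(bet k * α k)) - ∑ j, bet j * α j := by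
      simp_rw [mul_sub, Finset.sum_sub_distrib]
      congr 1
      · rw [Finset.sum_comm]
        apply Finset.sum_congr rfl
        intro k _
        rw [← Finset.sum_mul, hcolim k]
        ring
      · apply Finset.sum_congr rfl
        intro j _
        rw [← Finset.sum_mul, hrowim j]
    simp only [hw] at e1
    rw [e1, Finset.sum_neg_distrib, hsingle] at h
    linarith
  have key2 : ∀ α : Fin n → ℝ,
      ∑ j, lam j * α j ^ 2 ≤ ∑ j, ∑ k, (w j k).re * (α j * α k) := by
    intro α
    have h := (aux M zhat hzhat hloc α).2
    have e2 : ∑ j, ∑ k, (w j k).re * (α k - α j) ^ 2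
        = ((∑ k, lam k * α k ^ 2) + (∑ j, lam j * α j ^ 2))
          - 2 * ∑ j, ∑ k, (w j k).re * (α j * α k) := by
      have expand : ∀ j k : Fin n, (w j k).re * (α k - α j) ^ 2
          = ((w j k).re * α k ^ 2 + (w j k).re * α j ^ 2) - 2 * ((w j k).re * (α j * α k)) := by
        intro j k
        ring
      simp_rw [expand, Finset.sum_sub_distrib, Finset.sum_add_distrib, ← Finset.mul_sum]
      congr 1
      congr 1
      · rw [Finset.sum_comm]
        apply Finset.sum_congr rfl
        intro k _
        rw [← Finset.sum_mul, hcolre k]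
      · apply Finset.sum_congr rfl
        intro j _
        rw [← Finset.sum_mul, hrowre j]
    simp only [hw] at e2
    rw [e2] at h
    linarith
  constructor
  · -- first claim
    funext i
    have hβ : bet i = 0 := key1 i
    have hval : M.mulVec zhat i * star (zhat i) = ((lam i : ℝ) : ℂ) := by
      apply Complex.ext
      · simp [hlam]
      · simpa [hbet] using hβ
    have hmv : M.mulVec zhat i = ((lam i : ℝ) : ℂ) * zhat i := by
      calc M.mulVec zhat i = M.mulVec zhat i * ((starRingEnd ℂ) (zhat i) * zhat i) := by
            rw [hnorm i]; ring
        _ = (M.mulVec zhat i * star (zhat i)) * zhat i := by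
            rw [Complex.star_def]; ring
        _ = ((lam i : ℝ) : ℂ) * zhat i := by rw [hval]
    simp only [certMat, Matrix.sub_mulVec, Pi.sub_apply, Pi.zero_apply,
      Matrix.mulVec_diagonal]
    have hd : ((((M.mulVec zhat i) * star (zhat i)).re : ℝ) : ℂ) = ((lam i : ℝ) : ℂ) := by
      simp only [hlam]
    rw [hd, hmv]
    ring
  · -- second claim
    intro zdot hz
    set α : Fin n → ℝ := fun j => (zdot j * star (zhat j)).im with hα
    have hzd : ∀ j, zdot j = ((α j : ℝ) : ℂ) * I * zhat j := by
      intro j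
      have h1 : zdot j * star (zhat j) = ((α j : ℝ) : ℂ) * I := by
        apply Complex.ext
        · simpa using hz j
        · simp [hα]
      calc zdot j = zdot j * ((starRingEnd ℂ) (zhat j) * zhat j) := by rw [hnorm j]; ring
        _ = (zdot j * star (zhat j)) * zhat j := by rw [Complex.star_def]; ring
        _ = ((α j : ℝ) : ℂ) * I * zhat j := by rw [h1]
    have hA : (star zdot ⬝ᵥ M.mulVec zdot).re = ∑ j, ∑ k, (w j k).re * (α j * α k) := by
      have e : star zdot ⬝ᵥ M.mulVec zdot
          = ∑ j, ∑ k, ((α j * α k : ℝ) : ℂ) * w j k := by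
        simp only [dotProduct, Matrix.mulVec, Pi.star_apply, Complex.star_def,
          Finset.mul_sum]
        apply Finset.sum_congr rfl
        intro j _
        apply Finset.sum_congr rfl
        intro k _
        rw [hzd j, hzd k]
        simp only [hw]
        calc (starRingEnd ℂ) ((α j : ℂ) * I * zhat j) * (M j k * ((α k : ℂ) * I * zhat k))
            = (α j : ℂ) * (α k : ℂ) * (-(I*I)) * ((starRingEnd ℂ) (zhat j) * M j k * zhat k) := by
              simp only [_root_.map_mul, Complex.conj_I, Complex.conj_ofReal]
              ring
          _ = ((α j * α k : ℝ) : ℂ) * ((starRingEnd ℂ) (zhat j) * M j k * zhat k) := by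
              rw [Complex.I_mul_I]
              push_cast
              ring
      rw [e, Complex.re_sum]
      apply Finset.sum_congr rfl
      intro j _
      rw [Complex.re_sum]
      apply Finset.sum_congr rfl
      intro k _
      rw [Complex.re_ofReal_mul]
      ring
    have hB : (star zdot ⬝ᵥ (Matrix.diagonal (fun i => ((lam i : ℝ) : ℂ))).mulVec zdot).re
        = ∑ j, lam j * α j ^ 2 := by
      have e : star zdot ⬝ᵥ (Matrix.diagonal (fun i => ((lam i : ℝ) : ℂ))).mulVec zdot
          = ∑ j, ((lam j * α j ^ 2 : ℝ) : ℂ) := by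
        simp only [dotProduct, Matrix.mulVec_diagonal, Pi.star_apply, Complex.star_def]
        apply Finset.sum_congr rfl
        intro j _
        rw [hzd j]
        calc (starRingEnd ℂ) ((α j : ℂ) * I * zhat j) * ((lam j : ℂ) * ((α j : ℂ) * I * zhat j))
            = (lam j : ℂ) * (α j : ℂ) ^ 2 * (-(I * I)) * ((starRingEnd ℂ) (zhat j) * zhat j) := by
              simp only [_root_.map_mul, Complex.conj_I, Complex.conj_ofReal]
              ring
          _ = ((lam j * α j ^ 2 : ℝ) : ℂ) := by
              rw [hnorm j, Complex.I_mul_I]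
              push_cast
              ring
      rw [e, Complex.re_sum]
      simp only [Complex.ofReal_re]
    have hkey := key2 α
    have hsplit : (star zdot ⬝ᵥ (certMat M zhat).mulVec zdot).re
        = (star zdot ⬝ᵥ M.mulVec zdot).re
          - (star zdot ⬝ᵥ (Matrix.diagonal (fun i => ((lam i : ℝ) : ℂ))).mulVec zdot).re := by
      simp only [certMat, Matrix.sub_mulVec, dotProduct_sub, Complex.sub_re]
      rfl
    rw [hsplit, hA, hB]
    linarith
end
end

section
/- Let M ∈ ℂ^{n×n} be Hermitian. A Hermitian matrix X̂ ∈ ℂ^{n×n} is a global minimizer of Re tr(M X) over the set {X Hermitian : X ⪰ 0, diag(X) = 𝟙} if and only if there exists a Hermitian matrix Ŝ ∈ ℂ^{n×n} such that: (1) diag(X̂) = 𝟙; (2) X̂ ⪰ 0; (3) Ŝ X̂ = 0; (4) M − Ŝ is a real diagonal matrix; (5) Ŝ ⪰ 0. (Paper's Lemma 2, equivalence part.) -/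
open Matrix Complex Filter Topology
open scoped ComplexOrder

namespace SDPAux

variable {n : ℕ}

/-- trace of `diagonal d * X`. -/
lemma trace_diagonal_mul (d : Fin n → ℝ) (X : Matrix (Fin n) (Fin n) ℂ) :
    (Matrix.diagonal (fun i => (d i : ℂ)) * X).trace = ∑ i, (d i : ℂ) * X i i := by
  simp [Matrix.trace, Matrix.diag, Matrix.mul_apply, Matrix.diagonal]

lemma trace_psd_nonneg {A : Matrix (Fin n) (Fin n) ℂ} (hA : A.PosSemidef) :
    0 ≤ A.trace.re := by
  have h : ∀ i, 0 ≤ (A i i).re := by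
    intro i
    have := hA.re_dotProduct_nonneg (Pi.single i 1)
    simpa [dotProduct, Matrix.mulVec, Pi.single_apply, Finset.sum_ite_eq,
      dotProduct] using this
  simpa [Matrix.trace, Matrix.diag, Complex.re_sum] using Finset.sum_nonneg (fun i _ => h i)

open scoped MatrixOrder in
lemma trace_mul_psd_nonneg {S X : Matrix (Fin n) (Fin n) ℂ}
    (hS : S.PosSemidef) (hX : X.PosSemidef) : 0 ≤ ((S * X).trace).re := by
  obtain ⟨B, rfl⟩ := CStarAlgebra.nonneg_iff_eq_star_mul_self.mp hS.nonneg
  have h2 : (star B * B * X).trace = (B * X * Bᴴ).trace :=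
    (Matrix.trace_mul_cycle B X Bᴴ).symm
  rw [h2]
  exact trace_psd_nonneg (hX.mul_mul_conjTranspose_same B)


lemma retrace_eq {M S : Matrix (Fin n) (Fin n) ℂ} {d : Fin n → ℝ}
    (hMS : M = Matrix.diagonal (fun i => (d i : ℂ)) + S)
    {X : Matrix (Fin n) (Fin n) ℂ} (hXd : ∀ i, X i i = 1) :
    ((M * X).trace).re = (∑ i, d i) + ((S * X).trace).re := by
  rw [hMS, Matrix.add_mul, Matrix.trace_add, Complex.add_re, trace_diagonal_mul]
  congr 1
  simp [hXd, Complex.re_sum]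

lemma backward_min {M Xhat S : Matrix (Fin n) (Fin n) ℂ} {d : Fin n → ℝ}
    (hMS : M = Matrix.diagonal (fun i => (d i : ℂ)) + S) (hSpsd : S.PosSemidef)
    (hSX : S * Xhat = 0) (hXhatd : ∀ i, Xhat i i = 1)
    {X : Matrix (Fin n) (Fin n) ℂ} (hXpsd : X.PosSemidef) (hXd : ∀ i, X i i = 1) :
    ((M * Xhat).trace).re ≤ ((M * X).trace).re := by
  rw [retrace_eq hMS hXhatd, retrace_eq hMS hXd, hSX]
  simp only [Matrix.trace_zero, Complex.zero_re, add_zero]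
  have := trace_mul_psd_nonneg hSpsd hXpsd
  linarith


lemma herm_dot_im {A : Matrix (Fin n) (Fin n) ℂ} (hA : A.IsHermitian) (x : Fin n → ℂ) :
    (star x ⬝ᵥ A *ᵥ x).im = 0 := by
  have h : (starRingEnd ℂ) (star x ⬝ᵥ A *ᵥ x) = star x ⬝ᵥ A *ᵥ x := by
    calc (starRingEnd ℂ) (star x ⬝ᵥ A *ᵥ x) = star (star x ⬝ᵥ A *ᵥ x) := rfl
    _ = star (A *ᵥ x) ⬝ᵥ x := by rw [star_dotProduct, star_star]
    _ = (star x ᵥ* Aᴴ) ⬝ᵥ x := by rw [Matrix.star_mulVec]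
    _ = star x ⬝ᵥ Aᴴ *ᵥ x := by rw [Matrix.dotProduct_mulVec]
    _ = star x ⬝ᵥ A *ᵥ x := by rw [hA.eq]
  exact Complex.conj_eq_iff_im.mp h

lemma posSemidef_of_re {A : Matrix (Fin n) (Fin n) ℂ} (hA : A.IsHermitian)
    (h : ∀ x : Fin n → ℂ, 0 ≤ (star x ⬝ᵥ A *ᵥ x).re) : A.PosSemidef := by
  refine Matrix.PosSemidef.of_dotProduct_mulVec_nonneg hA fun x => ?_
  rw [Complex.le_def]
  exact ⟨by simpa using h x, by simp [herm_dot_im hA x]⟩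

lemma not_posSemidef_re {A : Matrix (Fin n) (Fin n) ℂ} (hA : A.IsHermitian)
    (h : ¬ A.PosSemidef) : ∃ x : Fin n → ℂ, (star x ⬝ᵥ A *ᵥ x).re < 0 := by
  by_contra hc
  push_neg at hc
  exact h (posSemidef_of_re hA hc)

lemma continuous_qform (A : Matrix (Fin n) (Fin n) ℂ) :
    Continuous fun v : Fin n → ℂ => (star v ⬝ᵥ A *ᵥ v).re := by
  have : (fun v : Fin n → ℂ => (star v ⬝ᵥ A *ᵥ v).re)
      = fun v => (∑ i, star (v i) * ∑ j, A i j * v j).re := by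
    funext v
    rfl
  rw [this]
  refine Complex.continuous_re.comp (continuous_finset_sum _ fun i _ => Continuous.mul ?_ ?_)
  · exact continuous_star.comp (continuous_apply i)
  · exact continuous_finset_sum _ fun j _ => continuous_const.mul (continuous_apply j)

lemma qform_smul (A : Matrix (Fin n) (Fin n) ℂ) (c : ℝ) (x : Fin n → ℂ) :
    (star (c • x) ⬝ᵥ A *ᵥ (c • x)).re = c ^ 2 * (star x ⬝ᵥ A *ᵥ x).re := by
  have h1 : star (c • x) = c • star x := by
    funext i; simp [Complex.real_smul, _root_.map_mul]
  rw [h1, Matrix.mulVec_smul, smul_dotProduct, dotProduct_smul]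
  simp only [Complex.real_smul, Complex.mul_re, Complex.ofReal_re, Complex.ofReal_im,
    Complex.mul_im, zero_mul, mul_zero, sub_zero, zero_add]
  ring


lemma qform_add_smul (Xhat B : Matrix (Fin n) (Fin n) ℂ) (t : ℝ) (x : Fin n → ℂ) :
    (star x ⬝ᵥ (Xhat + (t : ℂ) • B) *ᵥ x).re
      = (star x ⬝ᵥ Xhat *ᵥ x).re + t * (star x ⬝ᵥ B *ᵥ x).re := by
  rw [Matrix.add_mulVec, dotProduct_add, Matrix.smul_mulVec,
    dotProduct_smul]
  simp only [Complex.add_re, smul_eq_mul, Complex.mul_re, Complex.ofReal_re,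
    Complex.ofReal_im, zero_mul, sub_zero]

lemma exists_t_posSemidef {Xhat B : Matrix (Fin n) (Fin n) ℂ}
    (hX : Xhat.PosSemidef) (hB : B.IsHermitian)
    (hker : ∀ v : Fin n → ℂ, Xhat *ᵥ v = 0 → v ≠ 0 → 0 < (star v ⬝ᵥ B *ᵥ v).re) :
    ∃ t : ℝ, 0 < t ∧ (Xhat + (t : ℂ) • B).PosSemidef := by
  by_contra hcon
  push_neg at hcon
  have hherm : ∀ t : ℝ, (Xhat + (t : ℂ) • B).IsHermitian := by
    intro t
    have : ((t : ℂ) • B).IsHermitian := by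
      unfold Matrix.IsHermitian
      rw [Matrix.conjTranspose_smul, hB.eq, Complex.star_def, Complex.conj_ofReal]
    exact hX.1.add this
  -- produce unit vectors witnessing failure
  have key : ∀ k : ℕ, ∃ u : Fin n → ℂ, ‖u‖ = 1 ∧
      (star u ⬝ᵥ Xhat *ᵥ u).re + (1 / ((k : ℝ) + 1)) * (star u ⬝ᵥ B *ᵥ u).re < 0 := by
    intro k
    have htk : (0 : ℝ) < 1 / ((k : ℝ) + 1) := by positivity
    obtain ⟨x, hx⟩ := not_posSemidef_re (hherm _) (hcon _ htk)
    rw [qform_add_smul] at hx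
    have hx0 : x ≠ 0 := by
      rintro rfl
      simp at hx
    have hnx : (0 : ℝ) < ‖x‖ := norm_pos_iff.mpr hx0
    refine ⟨‖x‖⁻¹ • x, ?_, ?_⟩
    · rw [norm_smul, norm_inv, norm_norm, inv_mul_cancel₀ hnx.ne']
    · rw [qform_smul, qform_smul]
      have h2 : (0 : ℝ) < (‖x‖⁻¹) ^ 2 := by positivity
      calc (‖x‖⁻¹) ^ 2 * (star x ⬝ᵥ Xhat *ᵥ x).re
            + 1 / ((k : ℝ) + 1) * ((‖x‖⁻¹) ^ 2 * (star x ⬝ᵥ B *ᵥ x).re)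
          = (‖x‖⁻¹) ^ 2 * ((star x ⬝ᵥ Xhat *ᵥ x).re
            + 1 / ((k : ℝ) + 1) * (star x ⬝ᵥ B *ᵥ x).re) := by ring
        _ < 0 := mul_neg_of_pos_of_neg h2 hx
  choose u hu1 hu2 using key
  -- a bound for the B-form on the unit sphere
  set C : ℝ := ∑ i : Fin n, ∑ j : Fin n, ‖B i j‖ with hC
  have hbound : ∀ v : Fin n → ℂ, ‖v‖ = 1 → |(star v ⬝ᵥ B *ᵥ v).re| ≤ C := by
    intro v hv
    have hvi : ∀ i, ‖v i‖ ≤ 1 := by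
      intro i
      have := norm_le_pi_norm v i
      rwa [hv] at this
    have h1 : |(star v ⬝ᵥ B *ᵥ v).re| ≤ ‖star v ⬝ᵥ B *ᵥ v‖ :=
      Complex.abs_re_le_norm _
    refine h1.trans ?_
    have h2 : ‖star v ⬝ᵥ B *ᵥ v‖ ≤ ∑ i, ‖star (v i) * (B *ᵥ v) i‖ :=
      norm_sum_le _ _
    refine h2.trans (Finset.sum_le_sum fun i _ => ?_)
    rw [norm_mul]
    have h3 : ‖(B *ᵥ v) i‖ ≤ ∑ j, ‖B i j‖ := by
      refine (norm_sum_le Finset.univ (fun j => B i j * v j)).trans (Finset.sum_le_sum fun j _ => ?_)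
      rw [norm_mul]
      calc ‖B i j‖ * ‖v j‖ ≤ ‖B i j‖ * 1 :=
            mul_le_mul_of_nonneg_left (hvi j) (norm_nonneg _)
        _ = ‖B i j‖ := mul_one _
    calc ‖star (v i)‖ * ‖(B *ᵥ v) i‖
        ≤ 1 * (∑ j, ‖B i j‖) := by
          refine mul_le_mul ?_ h3 (norm_nonneg _) zero_le_one
          rw [show star (v i) = (starRingEnd ℂ) (v i) from rfl, Complex.norm_conj]
          exact hvi i
      _ = ∑ j, ‖B i j‖ := one_mul _
  -- compactness: extract a converging subsequence
  have husph : ∀ k, u k ∈ Metric.sphere (0 : Fin n → ℂ) 1 := by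
    intro k
    rw [mem_sphere_zero_iff_norm]
    exact hu1 k
  obtain ⟨x, hxs, φ, hφ, hconv⟩ :=
    (isCompact_sphere (0 : Fin n → ℂ) 1).tendsto_subseq husph
  have hx1 : ‖x‖ = 1 := mem_sphere_zero_iff_norm.mp hxs
  have hx0 : x ≠ 0 := by
    intro h
    rw [h, norm_zero] at hx1
    exact one_ne_zero hx1.symm
  have htend : Tendsto (fun k => u (φ k)) atTop (nhds x) := hconv
  have htX : Tendsto (fun k => (star (u (φ k)) ⬝ᵥ Xhat *ᵥ (u (φ k))).re) atTop
      (nhds ((star x ⬝ᵥ Xhat *ᵥ x).re)) :=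
    ((continuous_qform Xhat).tendsto x).comp htend
  have htB : Tendsto (fun k => (star (u (φ k)) ⬝ᵥ B *ᵥ (u (φ k))).re) atTop
      (nhds ((star x ⬝ᵥ B *ᵥ x).re)) :=
    ((continuous_qform B).tendsto x).comp htend
  have hann : ∀ k, 0 ≤ (star (u k) ⬝ᵥ Xhat *ᵥ (u k)).re := fun k =>
    hX.re_dotProduct_nonneg (u k)
  have hbneg : ∀ k, (star (u k) ⬝ᵥ B *ᵥ (u k)).re < 0 := by
    intro k
    have h := hu2 k
    have htk : (0 : ℝ) < 1 / ((k : ℝ) + 1) := by positivity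
    nlinarith [hann k]
  have haup : ∀ k, (star (u k) ⬝ᵥ Xhat *ᵥ (u k)).re ≤ (1 / ((k : ℝ) + 1)) * C := by
    intro k
    have h := hu2 k
    have htk : (0 : ℝ) < 1 / ((k : ℝ) + 1) := by positivity
    have hb := hbound (u k) (hu1 k)
    have h2 : (star (u k) ⬝ᵥ Xhat *ᵥ (u k)).re
        < (1 / ((k : ℝ) + 1)) * (-(star (u k) ⬝ᵥ B *ᵥ (u k)).re) := by nlinarith
    have h3 : -(star (u k) ⬝ᵥ B *ᵥ (u k)).re ≤ C := by
      have := abs_le.mp hb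
      linarith [this.1]
    nlinarith
  -- the X-form tends to zero along the subsequence
  have ht0 : Tendsto (fun k : ℕ => (1 / ((φ k : ℝ) + 1)) * C) atTop (nhds 0) := by
    have h1 : Tendsto (fun k : ℕ => 1 / ((k : ℝ) + 1)) atTop (nhds 0) :=
      tendsto_one_div_add_atTop_nhds_zero_nat
    have h2 := (h1.comp hφ.tendsto_atTop).mul_const C
    simpa using h2
  have hXx : (star x ⬝ᵥ Xhat *ᵥ x).re = 0 := by
    have hle := le_of_tendsto_of_tendsto' htX ht0 (fun k => haup (φ k))
    have hge := ge_of_tendsto' htX (fun k => hann (φ k))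
    linarith
  have hXv : Xhat *ᵥ x = 0 := by
    rw [← hX.dotProduct_mulVec_zero_iff]
    exact Complex.ext (by simpa using hXx) (by simpa using herm_dot_im hX.1 x)
  have hBle : (star x ⬝ᵥ B *ᵥ x).re ≤ 0 :=
    le_of_tendsto htB (Filter.Eventually.of_forall fun k => (hbneg (φ k)).le)
  exact absurd (hker x hXv hx0) (not_lt.mpr hBle)


/-- Embed a matrix into Euclidean space. -/
def mv (A : Matrix (Fin n) (Fin n) ℂ) : EuclideanSpace ℂ (Fin n × Fin n) :=
  WithLp.toLp 2 (fun p : Fin n × Fin n => A p.1 p.2)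

lemma mv_apply (A : Matrix (Fin n) (Fin n) ℂ) (p : Fin n × Fin n) : mv A p = A p.1 p.2 := rfl

lemma mv_inj {A B : Matrix (Fin n) (Fin n) ℂ} (h : mv A = mv B) : A = B := by
  ext i j
  exact congrFun (congrArg WithLp.ofLp h) (i, j)

lemma inner_mv {A : Matrix (Fin n) (Fin n) ℂ} (hA : A.IsHermitian)
    (Bm : Matrix (Fin n) (Fin n) ℂ) :
    inner ℝ (mv A) (mv Bm) = ((A * Bm).trace).re := by
  have hconj : ∀ i j, (starRingEnd ℂ) (A i j) = A j i := by
    intro i j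
    have := congrFun (congrFun hA.eq j) i
    simpa [Matrix.conjTranspose_apply] using this
  have h1 : inner ℝ (mv A) (mv Bm)
      = ∑ p : Fin n × Fin n, ((starRingEnd ℂ) (A p.1 p.2) * Bm p.1 p.2).re := by
    rw [PiLp.inner_apply]
    refine Finset.sum_congr rfl fun p _ => ?_
    rw [Complex.inner, mul_comm]
    rfl
  rw [h1]
  have h2 : ((A * Bm).trace).re = ∑ i, ∑ j, (A i j * Bm j i).re := by
    rw [Matrix.trace]
    simp only [Matrix.diag, Matrix.mul_apply, Complex.re_sum]
  rw [h2, Fintype.sum_prod_type, Finset.sum_comm]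
  refine Finset.sum_congr rfl fun j _ => Finset.sum_congr rfl fun i _ => ?_
  rw [hconj]

/-- The dual-certificate cone, viewed inside Euclidean space. -/
def CK (Xhat : Matrix (Fin n) (Fin n) ℂ) : Set (EuclideanSpace ℂ (Fin n × Fin n)) :=
  {y | ∃ d : Fin n → ℝ, ∃ S : Matrix (Fin n) (Fin n) ℂ, S.PosSemidef ∧ S * Xhat = 0 ∧
    y = mv (Matrix.diagonal (fun i => (d i : ℂ)) + S)}

lemma sum_ite_erase (i : Fin n) (f : Fin n → ℂ) :
    ∑ l, (if l = i then (0 : ℂ) else f l) = (∑ l, f l) - f i := by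
  have h2 : ∑ l, (if l = i then f l else 0) = f i := Fintype.sum_ite_eq' i f
  have h3 : ∑ l, ((if l = i then f l else 0) + (if l = i then 0 else f l)) = ∑ l, f l := by
    refine Finset.sum_congr rfl fun l _ => ?_
    split <;> simp
  rw [Finset.sum_add_distrib, h2] at h3
  linear_combination h3

lemma CK_closed (Xhat : Matrix (Fin n) (Fin n) ℂ) (hXd : ∀ i, Xhat i i = 1) :
    IsClosed (CK Xhat) := by
  rw [← isSeqClosed_iff_isClosed]
  intro f y hf hfy
  choose d S hps hsx hy using hf
  -- entrywise convergence
  have hent : ∀ p : Fin n × Fin n, Tendsto (fun k => f k p) atTop (nhds (y p)) := by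
    intro p
    have := ((EuclideanSpace.proj p).continuous.tendsto y).comp hfy
    exact this
  classical
  set Sl : Matrix (Fin n) (Fin n) ℂ := Matrix.of (fun i j =>
    if i = j then -(∑ l, if l = i then 0 else y (i, l) * Xhat l i) else y (i, j)) with hSldef
  have hfk : ∀ k i j, f k (i, j) = Matrix.diagonal (fun i => ((d k i : ℝ) : ℂ)) i j + S k i j := by
    intro k i j
    rw [hy k]
    rfl
  have hoff : ∀ i j, i ≠ j → ∀ k, S k i j = f k (i, j) := by
    intro i j hij k
    rw [hfk k i j, Matrix.diagonal_apply_ne _ hij, zero_add]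
  have hdiagS : ∀ i k, S k i i = -(∑ l, if l = i then 0 else S k i l * Xhat l i) := by
    intro i k
    have h0 : ∑ l, S k i l * Xhat l i = 0 := by
      have := congrFun (congrFun (hsx k) i) i
      simpa [Matrix.mul_apply] using this
    rw [sum_ite_erase i (fun l => S k i l * Xhat l i), h0, hXd i, mul_one] at *
    linear_combination -h0
  have hlim : ∀ i j, Tendsto (fun k => S k i j) atTop (nhds (Sl i j)) := by
    intro i j
    by_cases hij : i = j
    · subst hij
      have hterm : ∀ l : Fin n, Tendsto (fun k => if l = i then (0 : ℂ) else S k i l * Xhat l i)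
          atTop (nhds (if l = i then 0 else y (i, l) * Xhat l i)) := by
        intro l
        by_cases hl : l = i
        · simp [hl]
        · simp only [if_neg hl]
          have h1 : Tendsto (fun k => S k i l) atTop (nhds (y (i, l))) := by
            have heq : (fun k => S k i l) = fun k => f k (i, l) :=
              funext (hoff i l (Ne.symm hl))
            rw [heq]
            exact hent (i, l)
          exact h1.mul_const _
      have hsum := tendsto_finset_sum Finset.univ (fun l (_ : l ∈ Finset.univ) => hterm l)
      have hmain : Tendsto (fun k => S k i i) atTop
          (nhds (-(∑ l, if l = i then 0 else y (i, l) * Xhat l i))) := by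
        have heq : (fun k => S k i i)
            = fun k => -(∑ l, if l = i then 0 else S k i l * Xhat l i) :=
          funext (fun k => hdiagS i k)
        rw [heq]
        exact hsum.neg
      have hSli : Sl i i = -(∑ l, if l = i then 0 else y (i, l) * Xhat l i) := by
        simp [hSldef]
      rw [hSli]
      exact hmain
    · have hSlij : Sl i j = y (i, j) := by simp [hSldef, hij]
      have heq : (fun k => S k i j) = fun k => f k (i, j) := funext (hoff i j hij)
      rw [hSlij, heq]
      exact hent (i, j)
  have hherm : Sl.IsHermitian := by
    refine Matrix.ext fun i j => ?_
    rw [Matrix.conjTranspose_apply]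
    have h1 : Tendsto (fun k => star (S k j i)) atTop (nhds (star (Sl j i))) :=
      (continuous_star.tendsto _).comp (hlim j i)
    have h2 : (fun k => star (S k j i)) = fun k => S k i j := by
      funext k
      have := congrFun (congrFun ((hps k).1.eq) i) j
      simpa [Matrix.conjTranspose_apply] using this
    rw [h2] at h1
    exact tendsto_nhds_unique h1 (hlim i j)
  have hform : ∀ x : Fin n → ℂ, Tendsto (fun k => star x ⬝ᵥ (S k) *ᵥ x) atTop
      (nhds (star x ⬝ᵥ Sl *ᵥ x)) := by
    intro x
    have hexp : ∀ (A : Matrix (Fin n) (Fin n) ℂ),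
        star x ⬝ᵥ A *ᵥ x = ∑ i, star (x i) * ∑ j, A i j * x j := fun A => rfl
    simp only [hexp]
    refine tendsto_finset_sum _ fun i _ => Tendsto.const_mul _ ?_
    exact tendsto_finset_sum _ fun j _ => (hlim i j).mul_const _
  have hpsd : Sl.PosSemidef := by
    refine posSemidef_of_re hherm fun x => ?_
    have h1 : Tendsto (fun k => (star x ⬝ᵥ (S k) *ᵥ x).re) atTop
        (nhds ((star x ⬝ᵥ Sl *ᵥ x).re)) :=
      (Complex.continuous_re.tendsto _).comp (hform x)
    refine ge_of_tendsto' h1 fun k => ?_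
    have := (hps k).re_dotProduct_nonneg x
    simpa using this
  have hSlX : Sl * Xhat = 0 := by
    refine Matrix.ext fun i j => ?_
    have h1 : Tendsto (fun k => ∑ l, S k i l * Xhat l j) atTop
        (nhds (∑ l, Sl i l * Xhat l j)) :=
      tendsto_finset_sum _ fun l _ => (hlim i l).mul_const _
    have h2 : (fun k => ∑ l, S k i l * Xhat l j) = fun _ => (0 : ℂ) := by
      funext k
      have := congrFun (congrFun (hsx k) i) j
      simpa [Matrix.mul_apply] using this
    rw [h2] at h1
    have h3 : ∑ l, Sl i l * Xhat l j = 0 := (tendsto_nhds_unique h1 tendsto_const_nhds)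
    simpa [Matrix.mul_apply] using h3
  -- the diagonal part
  have hdim : ∀ i, (y (i, i) - Sl i i).im = 0 := by
    intro i
    have h1 : Tendsto (fun k => f k (i, i) - S k i i) atTop (nhds (y (i, i) - Sl i i)) :=
      (hent (i, i)).sub (hlim i i)
    have h2 : Tendsto (fun k => (f k (i, i) - S k i i).im) atTop
        (nhds ((y (i, i) - Sl i i).im)) := (Complex.continuous_im.tendsto _).comp h1
    have h3 : (fun k => (f k (i, i) - S k i i).im) = fun _ => (0 : ℝ) := by
      funext k
      rw [hfk k i i, Matrix.diagonal_apply_eq]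
      simp
    rw [h3] at h2
    exact tendsto_nhds_unique h2 tendsto_const_nhds
  refine ⟨fun i => (y (i, i)).re - (Sl i i).re, Sl, hpsd, hSlX, ?_⟩
  refine (WithLp.ext_iff 2).mpr ?_
  funext p
  obtain ⟨i, j⟩ := p
  rw [mv_apply]
  by_cases hij : i = j
  · subst hij
    show y (i, i) = Matrix.diagonal _ i i + Sl i i
    rw [Matrix.diagonal_apply_eq]
    have him : (y (i, i)).im = (Sl i i).im := by
      have := hdim i
      simp [Complex.sub_im] at this
      linarith
    apply Complex.ext
    · simp
    · simp [him]
  · show y (i, j) = Matrix.diagonal _ i j + Sl i j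
    rw [Matrix.diagonal_apply_ne _ hij, zero_add]
    simp [hSldef, hij]


lemma psd_real_smul {S : Matrix (Fin n) (Fin n) ℂ} (hS : S.PosSemidef) {c : ℝ} (hc : 0 ≤ c) :
    ((c : ℂ) • S).PosSemidef := by
  have hherm : ((c : ℂ) • S).IsHermitian := by
    unfold Matrix.IsHermitian
    rw [Matrix.conjTranspose_smul, hS.1.eq, Complex.star_def, Complex.conj_ofReal]
  refine posSemidef_of_re hherm fun x => ?_
  have h : star x ⬝ᵥ ((c : ℂ) • S) *ᵥ x = (c : ℂ) * (star x ⬝ᵥ S *ᵥ x) := by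
    rw [Matrix.smul_mulVec, dotProduct_smul, smul_eq_mul]
  rw [h, Complex.mul_re, Complex.ofReal_re, Complex.ofReal_im, zero_mul, sub_zero]
  have := hS.re_dotProduct_nonneg x
  exact mul_nonneg hc (by simpa using this)

lemma mv_add (A B : Matrix (Fin n) (Fin n) ℂ) : mv (A + B) = mv A + mv B := rfl

lemma mv_real_smul (c : ℝ) (A : Matrix (Fin n) (Fin n) ℂ) :
    c • mv A = mv ((c : ℂ) • A) := by
  refine (WithLp.ext_iff 2).mpr ?_
  funext p
  show c • (A p.1 p.2) = (c : ℂ) * A p.1 p.2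
  rw [Complex.real_smul]

/-- The dual-certificate cone as a convex cone. -/
noncomputable def Kcone (Xhat : Matrix (Fin n) (Fin n) ℂ) :
    ConvexCone ℝ (EuclideanSpace ℂ (Fin n × Fin n)) where
  carrier := CK Xhat
  smul_mem' := by
    rintro c hc y ⟨d, S, hS, hSX, rfl⟩
    refine ⟨fun i => c * d i, (c : ℂ) • S, psd_real_smul hS hc.le, ?_, ?_⟩
    · rw [Matrix.smul_mul, hSX, smul_zero]
    · rw [mv_real_smul]
      refine congrArg mv ?_
      rw [smul_add]
      congr 1
      refine Matrix.ext fun i j => ?_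
      by_cases h : i = j
      · subst h
        simp [Matrix.diagonal_apply_eq]
      · simp [Matrix.diagonal_apply_ne _ h]
  add_mem' := by
    rintro y ⟨d1, S1, hS1, hSX1, rfl⟩ z ⟨d2, S2, hS2, hSX2, rfl⟩
    refine ⟨fun i => d1 i + d2 i, S1 + S2, hS1.add hS2, ?_, ?_⟩
    · rw [Matrix.add_mul, hSX1, hSX2, add_zero]
    · rw [← mv_add]
      refine congrArg mv ?_
      refine Matrix.ext fun i j => ?_
      by_cases h : i = j
      · subst h
        simp [Matrix.diagonal_apply_eq]
        try ring
      · simp [Matrix.diagonal_apply_ne _ h]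
        try ring

lemma zero_mem_CK (Xhat : Matrix (Fin n) (Fin n) ℂ) : (0 : EuclideanSpace ℂ (Fin n × Fin n)) ∈ CK Xhat := by
  refine ⟨0, 0, Matrix.PosSemidef.zero, by rw [Matrix.zero_mul], ?_⟩
  refine (WithLp.ext_iff 2).mpr ?_
  funext p
  show (0 : ℂ) = _
  rw [mv_apply]
  simp


lemma forward_cert {M Xhat : Matrix (Fin n) (Fin n) ℂ} (hM : M.IsHermitian)
    (hpsd : Xhat.PosSemidef) (hdiag : ∀ i, Xhat i i = 1)
    (hmin : ∀ X : Matrix (Fin n) (Fin n) ℂ, X.PosSemidef → (∀ i, X i i = 1) →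
      ((M * Xhat).trace).re ≤ ((M * X).trace).re) :
    mv M ∈ CK Xhat := by
  by_contra hnm
  have hnm' : mv M ∉ Kcone Xhat := hnm
  obtain ⟨y, hy1, hy2⟩ := ProperCone.hyperplane_separation'
    (⟨(Kcone Xhat).toPointedCone (zero_mem_CK Xhat), CK_closed Xhat hdiag⟩ : ProperCone ℝ _) hnm'
  -- Hermitize the separating functional
  set Y : Matrix (Fin n) (Fin n) ℂ := Matrix.of (fun i j => y (i, j)) with hYdef
  set H : Matrix (Fin n) (Fin n) ℂ := ((2 : ℝ)⁻¹ : ℂ) • (Y + Yᴴ) with hHdef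
  have hmvY : mv Y = y := by
    refine (WithLp.ext_iff 2).mpr ?_
    funext p
    rw [mv_apply]
    rfl
  have hHherm : H.IsHermitian := by
    unfold Matrix.IsHermitian
    have hstar : star (((2 : ℝ)⁻¹ : ℂ)) = (((2 : ℝ)⁻¹ : ℂ)) := by
      norm_num [Complex.star_def, Complex.ext_iff]
    rw [hHdef, Matrix.conjTranspose_smul, Matrix.conjTranspose_add,
      Matrix.conjTranspose_conjTranspose, hstar, add_comm Yᴴ Y]
  have hinner : ∀ A : Matrix (Fin n) (Fin n) ℂ, A.IsHermitian →
      inner ℝ (mv A) y = ((A * H).trace).re := by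
    intro A hA
    have hconjA : ∀ i j, (starRingEnd ℂ) (A i j) = A j i := by
      intro i j
      have := congrFun (congrFun hA.eq j) i
      simpa [Matrix.conjTranspose_apply] using this
    have hYH : ((A * Yᴴ).trace).re = ((A * Y).trace).re := by
      have h1 : ((A * Yᴴ).trace).re = ∑ i, ∑ j, (A i j * (starRingEnd ℂ) (Y i j)).re := by
        rw [Matrix.trace]
        simp [Matrix.diag, Matrix.mul_apply, Complex.re_sum, Matrix.conjTranspose_apply]
      have h2 : ((A * Y).trace).re = ∑ i, ∑ j, (A i j * Y j i).re := by
        rw [Matrix.trace]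
        simp [Matrix.diag, Matrix.mul_apply, Complex.re_sum]
      rw [h1, h2]
      have hterm : ∀ i j, (A i j * (starRingEnd ℂ) (Y i j)).re = (A j i * Y i j).re := by
        intro i j
        rw [← Complex.conj_re (A i j * (starRingEnd ℂ) (Y i j)), _root_.map_mul, Complex.conj_conj,
          hconjA]
      simp only [hterm]
      exact Finset.sum_comm
    have hAH : A * H = ((2 : ℝ)⁻¹ : ℂ) • (A * Y + A * Yᴴ) := by
      rw [hHdef, Matrix.mul_smul, Matrix.mul_add]
    have h3 : ((A * H).trace).re = (2 : ℝ)⁻¹ * (((A * Y).trace).re + ((A * Yᴴ).trace).re) := by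
      rw [hAH, Matrix.trace_smul, Matrix.trace_add]
      simp only [smul_eq_mul, Complex.mul_re, Complex.ofReal_re, Complex.ofReal_im, zero_mul,
        sub_zero, Complex.add_re]
      norm_num
    rw [h3, hYH, ← hmvY, inner_mv hA]
    ring
  have hconjX : ∀ i j, (starRingEnd ℂ) (Xhat i j) = Xhat j i := by
    intro i j
    have := congrFun (congrFun hpsd.1.eq j) i
    simpa [Matrix.conjTranspose_apply] using this
  -- diagonal entries of H vanish
  have hdiagH : ∀ i, H i i = 0 := by
    intro i
    have hval : ∀ c : ℝ, 0 ≤ c * (H i i).re := by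
      intro c
      have hmem : mv (Matrix.diagonal (fun j => ((Pi.single i c : Fin n → ℝ) j : ℂ)))
          ∈ Kcone Xhat := by
        refine ⟨Pi.single i c, 0, Matrix.PosSemidef.zero, by rw [Matrix.zero_mul],
          by rw [add_zero]⟩
      have h1 := hy1 _ hmem
      have hdherm : (Matrix.diagonal
          (fun j => ((Pi.single i c : Fin n → ℝ) j : ℂ))).IsHermitian := by
        exact Matrix.isHermitian_diagonal_of_self_adjoint _
          (funext fun j => by simp [Pi.star_apply, Complex.star_def, Complex.conj_ofReal])
      rw [hinner _ hdherm, trace_diagonal_mul] at h1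
      have h2 : (∑ j, ((Pi.single i c : Fin n → ℝ) j : ℂ) * H j j) = (c : ℂ) * H i i := by
        rw [Finset.sum_eq_single i]
        · rw [Pi.single_eq_same]
        · intro j _ hj
          rw [Pi.single_eq_of_ne hj]
          simp
        · intro h
          exact absurd (Finset.mem_univ i) h
      rw [h2] at h1
      simpa [Complex.mul_re] using h1
    have hre : (H i i).re = 0 := by
      have hp := hval 1
      have hm2 := hval (-1)
      simp at hp hm2
      linarith
    have him : (H i i).im = 0 := by
      have := congrFun (congrFun hHherm.eq i) i
      rw [Matrix.conjTranspose_apply] at this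
      exact Complex.conj_eq_iff_im.mp this
    exact Complex.ext hre him
  -- H is positive on the kernel of Xhat
  have hkerH : ∀ v : Fin n → ℂ, Xhat *ᵥ v = 0 → 0 ≤ (star v ⬝ᵥ H *ᵥ v).re := by
    intro v hv
    set S : Matrix (Fin n) (Fin n) ℂ := Matrix.vecMulVec v (star v) with hSdef
    have hSapp : ∀ i j, S i j = v i * (starRingEnd ℂ) (v j) := fun i j => rfl
    have hSherm : S.IsHermitian := by
      refine Matrix.ext fun i j => ?_
      rw [Matrix.conjTranspose_apply, hSapp, hSapp]
      simp only [Complex.star_def, _root_.map_mul, Complex.conj_conj]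
      ring
    have hSpsd : S.PosSemidef := by
      refine posSemidef_of_re hSherm fun x => ?_
      have hform : star x ⬝ᵥ S *ᵥ x
          = (star v ⬝ᵥ x) * (starRingEnd ℂ) (star v ⬝ᵥ x) := by
        show ∑ i, star (x i) * (∑ j, (v i * star (v j)) * x j)
          = (∑ j, star (v j) * x j) * (starRingEnd ℂ) (∑ j, star (v j) * x j)
        rw [map_sum, Finset.sum_mul_sum]
        simp only [Finset.mul_sum]
        rw [Finset.sum_comm]
        refine Finset.sum_congr rfl fun j _ => Finset.sum_congr rfl fun i _ => ?_
        simp only [_root_.map_mul, Complex.conj_conj, Pi.star_apply, RCLike.star_def]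
        ring
      rw [hform, Complex.mul_conj]
      simp [Complex.normSq_nonneg]
    have hSX : S * Xhat = 0 := by
      refine Matrix.ext fun i j => ?_
      have h0 : (Xhat *ᵥ v) j = 0 := by rw [hv]; rfl
      have hinner0 : ∑ l, star (v l) * Xhat l j = (starRingEnd ℂ) ((Xhat *ᵥ v) j) := by
        rw [show (Xhat *ᵥ v) j = ∑ l, Xhat j l * v l from rfl, map_sum]
        refine Finset.sum_congr rfl fun l _ => ?_
        rw [_root_.map_mul, hconjX j l, show star (v l) = (starRingEnd ℂ) (v l) from rfl]
        ring
      show ∑ l, (v i * star (v l)) * Xhat l j = (0 : Matrix (Fin n) (Fin n) ℂ) i j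
      have : ∑ l, (v i * star (v l)) * Xhat l j = v i * ∑ l, star (v l) * Xhat l j := by
        rw [Finset.mul_sum]
        refine Finset.sum_congr rfl fun l _ => by ring
      rw [this, hinner0, h0]
      simp
    have hmem : mv (Matrix.diagonal (fun i => (((0 : Fin n → ℝ)) i : ℂ)) + S) ∈ Kcone Xhat :=
      ⟨0, S, hSpsd, hSX, rfl⟩
    have h1 := hy1 _ hmem
    have hdz : Matrix.diagonal (fun i : Fin n => (((0 : Fin n → ℝ)) i : ℂ)) = 0 := by
      simp
    rw [hdz, zero_add] at h1
    rw [hinner S hSherm] at h1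
    have htr : (S * H).trace = star v ⬝ᵥ H *ᵥ v := by
      show ∑ i, ∑ j, (v i * star (v j)) * H j i = ∑ j, star (v j) * ∑ i, H j i * v i
      rw [Finset.sum_comm]
      refine Finset.sum_congr rfl fun j _ => ?_
      rw [Finset.mul_sum]
      refine Finset.sum_congr rfl fun i _ => by ring
    rwa [htr] at h1
  -- the objective direction is negative
  have hMH : ((M * H).trace).re < 0 := by
    have h := hy2
    rw [hinner M hM] at h
    exact h
  -- for every ε > 0, minimality gives a nonnegative directional derivative
  have hstep : ∀ ε : ℝ, 0 < ε →
      0 ≤ ((M * H).trace).re + ε * ((M * (1 - Xhat)).trace).re := by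
    intro ε hε
    set B : Matrix (Fin n) (Fin n) ℂ := H + (ε : ℂ) • (1 - Xhat) with hBdef
    have hone : (1 - Xhat : Matrix (Fin n) (Fin n) ℂ).IsHermitian :=
      Matrix.isHermitian_one.sub hpsd.1
    have hBherm : B.IsHermitian := by
      have h2 : ((ε : ℂ) • (1 - Xhat) : Matrix (Fin n) (Fin n) ℂ).IsHermitian := by
        unfold Matrix.IsHermitian
        rw [Matrix.conjTranspose_smul, hone.eq, Complex.star_def, Complex.conj_ofReal]
      exact hHherm.add h2
    have hBdiag : ∀ i, B i i = 0 := by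
      intro i
      rw [hBdef]
      simp [Matrix.add_apply, hdiagH i, Matrix.smul_apply, Matrix.sub_apply,
        Matrix.one_apply_eq, hdiag i]
    have hBker : ∀ v : Fin n → ℂ, Xhat *ᵥ v = 0 → v ≠ 0 →
        0 < (star v ⬝ᵥ B *ᵥ v).re := by
      intro v hv hv0
      have h2 : (1 - Xhat) *ᵥ v = v := by
        rw [Matrix.sub_mulVec, Matrix.one_mulVec, hv, sub_zero]
      have h3 : (star v ⬝ᵥ (1 - Xhat) *ᵥ v).re = ∑ i, Complex.normSq (v i) := by
        rw [h2]
        show (∑ i, star (v i) * v i).re = _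
        rw [Complex.re_sum]
        refine Finset.sum_congr rfl fun i _ => ?_
        have hmc : star (v i) * v i = ((Complex.normSq (v i) : ℝ) : ℂ) := by
          rw [show star (v i) = (starRingEnd ℂ) (v i) from rfl, mul_comm, Complex.mul_conj]
        rw [hmc]
        simp
      have h4 : 0 < ∑ i, Complex.normSq (v i) := by
        obtain ⟨i, hi⟩ := Function.ne_iff.mp hv0
        exact Finset.sum_pos' (fun j _ => Complex.normSq_nonneg _)
          ⟨i, Finset.mem_univ i, Complex.normSq_pos.mpr hi⟩
      have h5 := hkerH v hv
      rw [hBdef, qform_add_smul H (1 - Xhat) ε v, h3]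
      nlinarith
    obtain ⟨t, ht, hpsdX⟩ := exists_t_posSemidef hpsd hBherm hBker
    have hXd : ∀ i, (Xhat + (t : ℂ) • B) i i = 1 := by
      intro i
      simp [Matrix.add_apply, Matrix.smul_apply, hBdiag i, hdiag i]
    have hm := hmin _ hpsdX hXd
    have hexp : ((M * (Xhat + (t : ℂ) • B)).trace).re
        = ((M * Xhat).trace).re + t * ((M * B).trace).re := by
      rw [Matrix.mul_add, Matrix.trace_add, Complex.add_re, Matrix.mul_smul, Matrix.trace_smul]
      simp [smul_eq_mul, Complex.mul_re, Complex.ofReal_re, Complex.ofReal_im]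
    rw [hexp] at hm
    have h6 : 0 ≤ t * ((M * B).trace).re := by linarith
    have h7 : 0 ≤ ((M * B).trace).re := by nlinarith
    have h8 : ((M * B).trace).re
        = ((M * H).trace).re + ε * ((M * (1 - Xhat)).trace).re := by
      rw [hBdef, Matrix.mul_add, Matrix.trace_add, Complex.add_re, Matrix.mul_smul,
        Matrix.trace_smul]
      simp [smul_eq_mul, Complex.mul_re, Complex.ofReal_re, Complex.ofReal_im]
    rw [h8] at h7
    exact h7
  -- derive the contradiction
  set a : ℝ := ((M * H).trace).re with hadef
  set b : ℝ := ((M * (1 - Xhat)).trace).re with hbdef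
  have hε : 0 < -a / (2 * (|b| + 1)) := by
    apply div_pos (by linarith) (by positivity)
  have h := hstep _ hε
  have hb1 : b ≤ |b| := le_abs_self b
  have hb2 : -|b| ≤ b := neg_abs_le b
  have habs : 0 ≤ |b| := abs_nonneg b
  have hkey : (-a / (2 * (|b| + 1))) * b ≤ (-a / (2 * (|b| + 1))) * |b| :=
    mul_le_mul_of_nonneg_left hb1 hε.le
  have hkey2 : (-a / (2 * (|b| + 1))) * |b| ≤ -a / 2 := by
    rw [div_mul_eq_mul_div, div_le_div_iff₀ (by positivity) (by norm_num)]
    nlinarith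
  linarith

end SDPAux

/-- **Paper's Lemma 2, equivalence part.** For Hermitian `M`, a Hermitian `X̂` is a
global minimizer of `Re tr(M X)` over `{X Hermitian : X ⪰ 0, diag(X) = 𝟙}` iff there
exists a Hermitian `Ŝ` with: (1) `diag(X̂) = 𝟙`; (2) `X̂ ⪰ 0`; (3) `Ŝ X̂ = 0`;
(4) `M − Ŝ` real diagonal; (5) `Ŝ ⪰ 0`. -/
theorem stmt1 {n : ℕ} (M Xhat : Matrix (Fin n) (Fin n) ℂ)
    (hM : M.IsHermitian) (hXhat : Xhat.IsHermitian) :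
    (Xhat.PosSemidef ∧ (∀ i, Xhat i i = 1) ∧
      ∀ X : Matrix (Fin n) (Fin n) ℂ, X.PosSemidef → (∀ i, X i i = 1) →
        ((M * Xhat).trace).re ≤ ((M * X).trace).re)
    ↔
    (∃ S : Matrix (Fin n) (Fin n) ℂ, S.IsHermitian ∧
      (∀ i, Xhat i i = 1) ∧
      Xhat.PosSemidef ∧
      S * Xhat = 0 ∧
      (∃ d : Fin n → ℝ, M - S = Matrix.diagonal (fun i => (d i : ℂ))) ∧
      S.PosSemidef) := by
  constructor
  · rintro ⟨hpsd, hdiag, hmin⟩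
    obtain ⟨d, S, hSpsd, hSX, hMeq⟩ := SDPAux.forward_cert hM hpsd hdiag hmin
    have hMeq' : M = Matrix.diagonal (fun i => (d i : ℂ)) + S := SDPAux.mv_inj hMeq
    refine ⟨S, hSpsd.1, hdiag, hpsd, hSX, ⟨d, ?_⟩, hSpsd⟩
    rw [hMeq', add_sub_cancel_right]
  · rintro ⟨S, hS, hdiag, hpsd, hSX, ⟨d, hd⟩, hSpsd⟩
    have hMS : M = Matrix.diagonal (fun i => (d i : ℂ)) + S := eq_add_of_sub_eq hd
    exact ⟨hpsd, hdiag, fun X hX hXd => SDPAux.backward_min hMS hSpsd hSX hdiag hX hXd⟩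
end

section
/- Let M ∈ ℂ^{n×n} be Hermitian and ẑ ∈ ℂ₁ⁿ satisfy Ŝ ẑ = 0, where Ŝ = M − Re(ddiag(M ẑ ẑᴴ)). If Ŝ ⪰ 0, then ẑ is a global minimizer of z ↦ zᴴ M z over ℂ₁ⁿ, and X̂ = ẑ ẑᴴ is a global minimizer of Re tr(M X) over {X Hermitian : X ⪰ 0, diag(X) = 𝟙}. Moreover, if rank(Ŝ) = n − 1, then X̂ is the unique global minimizer of the latter problem. (Paper's Lemma 3.) -/
open Matrix Complex
open scoped ComplexOrder

noncomputable section

lemma psd_trace_key {n : ℕ} {S X : Matrix (Fin n) (Fin n) ℂ} (hS : S.PosSemidef)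
    (hX : X.PosSemidef) :
    0 ≤ ((S * X).trace).re ∧ (((S * X).trace).re = 0 → S * X = 0) := by
  obtain ⟨B, rfl⟩ : ∃ B : Matrix (Fin n) (Fin n) ℂ, X = Bᴴ * B := by
    open scoped MatrixOrder in
    obtain ⟨a, ha⟩ := CStarAlgebra.nonneg_iff_eq_star_mul_self.mp hX.nonneg
    exact ⟨a, ha⟩
  have key : ∀ i, (B * (S * Bᴴ)) i i
      = star (fun k => star (B i k)) ⬝ᵥ S *ᵥ (fun k => star (B i k)) := by
    intro i
    simp only [Matrix.mul_apply, dotProduct, mulVec, conjTranspose_apply, Pi.star_apply,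
      star_star, Finset.mul_sum, Finset.sum_mul]
  have hd : ∀ i, 0 ≤ (B * (S * Bᴴ)) i i := fun i => (key i) ▸ hS.dotProduct_mulVec_nonneg _
  have htr : (S * (Bᴴ * B)).trace = (B * (S * Bᴴ)).trace := by
    rw [← Matrix.mul_assoc, Matrix.trace_mul_comm]
  have hre : ((S * (Bᴴ * B)).trace).re = ∑ i, ((B * (S * Bᴴ)) i i).re := by
    rw [htr, Matrix.trace]
    exact Complex.re_sum _ _
  constructor
  · rw [hre]
    exact Finset.sum_nonneg fun i _ => by simpa using (Complex.le_def.mp (hd i)).1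
  · intro h0
    rw [hre] at h0
    have hzero : ∀ i ∈ Finset.univ, ((B * (S * Bᴴ)) i i).re = 0 :=
      (Finset.sum_eq_zero_iff_of_nonneg
        (fun i _ => by simpa using (Complex.le_def.mp (hd i)).1)).mp h0
    have hSB : S * Bᴴ = 0 := by
      ext j i
      have hentry : (B * (S * Bᴴ)) i i = 0 := by
        have him := (Complex.le_def.mp (hd i)).2
        have := hzero i (Finset.mem_univ i)
        exact Complex.ext (by simpa using this) (by simpa using him.symm)
      rw [key i] at hentry
      have hmv := (hS.dotProduct_mulVec_zero_iff _).mp hentry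
      have := congrFun hmv j
      simpa [mulVec, dotProduct, conjTranspose_apply, Matrix.mul_apply] using this
    rw [← Matrix.mul_assoc, hSB, Matrix.zero_mul]


/-- **Paper's Lemma 3.** If `ẑ ∈ ℂ₁ⁿ` satisfies `Ŝ ẑ = 0` with
`Ŝ = M − Re(ddiag(M ẑ ẑᴴ))` and `Ŝ ⪰ 0`, then `ẑ` is a global minimizer of (QP) and
`X̂ = ẑ ẑᴴ` is a global minimizer of (SDP); if moreover `rank(Ŝ) = n − 1`, then `X̂`
is the unique global minimizer of (SDP). -/
theorem stmt3 {n : ℕ} (M : Matrix (Fin n) (Fin n) ℂ) (hM : M.IsHermitian)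
    (zhat : Fin n → ℂ) (hzhat : ∀ i, ‖zhat i‖ = 1)
    (hcrit : (certMat M zhat).mulVec zhat = 0)
    (hpsd : (certMat M zhat).PosSemidef) :
    (∀ z : Fin n → ℂ, (∀ i, ‖z i‖ = 1) →
      (star zhat ⬝ᵥ M.mulVec zhat).re ≤ (star z ⬝ᵥ M.mulVec z).re) ∧
    (∀ X : Matrix (Fin n) (Fin n) ℂ, X.PosSemidef → (∀ i, X i i = 1) →
      ((M * Matrix.vecMulVec zhat (star zhat)).trace).re ≤ ((M * X).trace).re) ∧
    ((certMat M zhat).rank = n - 1 →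
      ∀ X : Matrix (Fin n) (Fin n) ℂ, X.PosSemidef → (∀ i, X i i = 1) →
        ((M * X).trace).re = ((M * Matrix.vecMulVec zhat (star zhat)).trace).re →
        X = Matrix.vecMulVec zhat (star zhat)) := by
  set d : Fin n → ℝ := fun i => ((M.mulVec zhat i) * star (zhat i)).re with hd
  set S : Matrix (Fin n) (Fin n) ℂ := certMat M zhat with hS
  have hMS : M = S + Matrix.diagonal (fun i => (d i : ℂ)) := by
    rw [hS]; unfold certMat; rw [sub_add_cancel]
  -- unit modulus facts
  have hunit : ∀ i, star (zhat i) * zhat i = 1 := by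
    intro i
    rw [Complex.star_def, mul_comm, Complex.mul_conj, Complex.normSq_eq_norm_sq, hzhat i]
    norm_num
  have hz_ne : ∀ i, zhat i ≠ 0 := by
    intro i h
    have := hzhat i
    rw [h] at this; simp at this
  set E : ℝ := ∑ i, d i with hE
  -- quadratic form identity
  have hquad : ∀ z : Fin n → ℂ, (∀ i, ‖z i‖ = 1) →
      (star z ⬝ᵥ M.mulVec z).re = (star z ⬝ᵥ S.mulVec z).re + E := by
    intro z hz
    have hu : ∀ i, star (z i) * z i = 1 := by
      intro i
      rw [Complex.star_def, mul_comm, Complex.mul_conj, Complex.normSq_eq_norm_sq, hz i]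
      norm_num
    have : star z ⬝ᵥ M.mulVec z = star z ⬝ᵥ S.mulVec z + ∑ i, ((d i : ℂ)) := by
      conv_lhs => rw [hMS]
      rw [add_mulVec, dotProduct_add]
      congr 1
      rw [dotProduct]
      refine Finset.sum_congr rfl fun i _ => ?_
      rw [mulVec_diagonal]
      calc star z i * ((d i : ℂ) * z i) = (d i : ℂ) * (star (z i) * z i) := by
            simp only [Pi.star_apply]; ring
        _ = (d i : ℂ) := by rw [hu i, mul_one]
    rw [this]
    simp [hE, Complex.re_sum]
  have hqp_hat : (star zhat ⬝ᵥ M.mulVec zhat).re = E := by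
    rw [hquad zhat hzhat, hcrit]
    simp
  have hquad_nonneg : ∀ z : Fin n → ℂ, 0 ≤ (star z ⬝ᵥ S.mulVec z).re := by
    intro z
    simpa using (Complex.le_def.mp (hpsd.dotProduct_mulVec_nonneg z)).1
  -- trace identity for diag-one matrices
  have htrace : ∀ X : Matrix (Fin n) (Fin n) ℂ, (∀ i, X i i = 1) →
      ((M * X).trace).re = ((S * X).trace).re + E := by
    intro X hX1
    have : (M * X).trace = (S * X).trace + ∑ i, ((d i : ℂ)) := by
      conv_lhs => rw [hMS]
      rw [add_mul, Matrix.trace_add]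
      congr 1
      rw [Matrix.trace]
      refine Finset.sum_congr rfl fun i _ => ?_
      simp [Matrix.diag, Matrix.diagonal_mul, hX1 i]
    rw [this]
    simp [hE, Complex.re_sum]
  -- X̂ facts
  have hXhat_diag : ∀ i, (Matrix.vecMulVec zhat (star zhat)) i i = 1 := by
    intro i
    rw [Matrix.vecMulVec_apply, Pi.star_apply, mul_comm]
    exact hunit i
  have hSXhat : S * Matrix.vecMulVec zhat (star zhat) = 0 := by
    ext i j
    simp only [Matrix.mul_apply, Matrix.vecMulVec_apply, Matrix.zero_apply]
    have h0 : ∑ k, S i k * zhat k = 0 := by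
      have := congrFun hcrit i
      simpa [mulVec, dotProduct] using this
    calc ∑ k, S i k * (zhat k * (star zhat) j)
        = (∑ k, S i k * zhat k) * (star zhat) j := by
          rw [Finset.sum_mul]; exact Finset.sum_congr rfl fun k _ => by ring
      _ = 0 := by rw [h0, zero_mul]
  have htrace_hat : ((M * Matrix.vecMulVec zhat (star zhat)).trace).re = E := by
    rw [htrace _ hXhat_diag, hSXhat]
    simp
  refine ⟨?_, ?_, ?_⟩
  · intro z hz
    rw [hqp_hat, hquad z hz]
    have := hquad_nonneg z
    linarith
  · intro X hXpsd hX1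
    rw [htrace_hat, htrace X hX1]
    have := (psd_trace_key hpsd hXpsd).1
    linarith
  · intro hrank X hXpsd hX1 heq
    rcases Nat.eq_zero_or_pos n with hn | hn
    · subst hn; ext i j; exact i.elim0
    -- S * X = 0
    have hSX0 : S * X = 0 := by
      apply (psd_trace_key hpsd hXpsd).2
      rw [htrace X hX1, htrace_hat] at heq
      linarith
    -- kernel = span zhat
    have hz0 : zhat ≠ 0 := by
      intro h
      exact hz_ne ⟨0, hn⟩ (by rw [h]; rfl)
    have hker : LinearMap.ker S.mulVecLin = Submodule.span ℂ {zhat} := by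
      have hmem : zhat ∈ LinearMap.ker S.mulVecLin := by
        rw [LinearMap.mem_ker, Matrix.mulVecLin_apply]
        exact hcrit
      have hle : Submodule.span ℂ {zhat} ≤ LinearMap.ker S.mulVecLin := by
        rw [Submodule.span_le, Set.singleton_subset_iff]
        exact hmem
      have hfr : Module.finrank ℂ (LinearMap.ker S.mulVecLin) = 1 := by
        have h2 := LinearMap.finrank_range_add_finrank_ker S.mulVecLin
        have h3 : Module.finrank ℂ (Fin n → ℂ) = n := by
          simp [Module.finrank_fintype_fun_eq_card]
        have h4 : Module.finrank ℂ (LinearMap.range S.mulVecLin) = n - 1 := hrank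
        omega
      refine (Submodule.eq_of_le_of_finrank_le hle ?_).symm
      rw [hfr, finrank_span_singleton hz0]
    -- columns of X are in the span of zhat
    have hcol : ∀ j, (fun k => X k j) ∈ Submodule.span ℂ ({zhat} : Set (Fin n → ℂ)) := by
      intro j
      rw [← hker, LinearMap.mem_ker, Matrix.mulVecLin_apply]
      ext i
      have := congrFun (congrFun hSX0 i) j
      simpa [mulVec, dotProduct, Matrix.mul_apply] using this
    have hcol' := fun j => Submodule.mem_span_singleton.mp (hcol j)
    choose c hc using hcol'
    have hcval : ∀ j, c j = star (zhat j) := by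
      intro j
      have h1 : c j * zhat j = 1 := by
        have := congrFun (hc j) j
        simp only [Pi.smul_apply, smul_eq_mul] at this
        rw [this]; exact hX1 j
      have h2 := hunit j
      exact mul_right_cancel₀ (hz_ne j) (by rw [h1, h2])
    ext k j
    have := congrFun (hc j) k
    simp only [Pi.smul_apply, smul_eq_mul] at this
    rw [← this, hcval j, Matrix.vecMulVec_apply, Pi.star_apply, mul_comm]
end
end

section
/- Let M ∈ ℂ^{n×n} be Hermitian and let Ŷ ∈ OB(r,n) be rank-deficient (rank(Ŷ) < r) and second-order critical for minimizing Y ↦ Re tr(M Y Yᴴ) over OB(r,n), i.e., with S(Ŷ) = M − Re(ddiag(M Ŷ Ŷᴴ)) one has S(Ŷ) Ŷ = 0 and Re tr(Ẏᴴ S(Ŷ) Ẏ) ≥ 0 for every Ẏ ∈ ℂ^{n×r} with Re(ddiag(Ẏ Ŷᴴ)) = 0. Then Ŷ is a global minimizer of Y ↦ Re tr(M Y Yᴴ) over OB(r,n), and X̂ = Ŷ Ŷᴴ is a global minimizer of Re tr(M X) over {X Hermitian : X ⪰ 0, diag(X) = 𝟙}. (Paper's Proposition 2.) -/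
open Matrix Complex
open scoped ComplexOrder

noncomputable section

/-- `SMat M Y = M − Re(ddiag(M Y Yᴴ))`, the certificate matrix `S(Y)` for (r-SDP). -/
def SMat {n r : ℕ} (M : Matrix (Fin n) (Fin n) ℂ) (Y : Matrix (Fin n) (Fin r) ℂ) :
    Matrix (Fin n) (Fin n) ℂ :=
  M - Matrix.diagonal (fun i => (((M * Y * Yᴴ) i i).re : ℂ))

lemma SMat_isHermitian {n r : ℕ} (M : Matrix (Fin n) (Fin n) ℂ) (hM : M.IsHermitian)
    (Y : Matrix (Fin n) (Fin r) ℂ) : (SMat M Y).IsHermitian := by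
  refine hM.sub (isHermitian_diagonal_of_self_adjoint _ (funext fun i => ?_))
  simp

lemma exists_ker {n r : ℕ} (Y : Matrix (Fin n) (Fin r) ℂ) (hrank : Y.rank < r) :
    ∃ z : Fin r → ℂ, z ≠ 0 ∧ Y *ᵥ z = 0 := by
  have h1 : Y.rank + Module.finrank ℂ (LinearMap.ker Y.mulVecLin) = r := by
    have := LinearMap.finrank_range_add_finrank_ker Y.mulVecLin
    rwa [Module.finrank_fin_fun] at this
  have hpos : 0 < Module.finrank ℂ (LinearMap.ker Y.mulVecLin) := by omega
  have : Nontrivial (LinearMap.ker Y.mulVecLin) := Module.finrank_pos_iff.mp hpos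
  obtain ⟨z, hz⟩ := exists_ne (0 : LinearMap.ker Y.mulVecLin)
  exact ⟨z.1, fun h => hz (Subtype.ext h), z.2⟩

lemma trace_psd_nonneg {n : ℕ} {S X : Matrix (Fin n) (Fin n) ℂ}
    (hS : S.PosSemidef) (hX : X.PosSemidef) : 0 ≤ (S * X).trace := by
  obtain ⟨B, hB⟩ := by open scoped MatrixOrder in exact CStarAlgebra.nonneg_iff_eq_star_mul_self.mp hX.nonneg
  rw [show star B = Bᴴ from rfl] at hB; subst hB
  rw [show S * (Bᴴ * B) = (S * Bᴴ) * B by rw [Matrix.mul_assoc], Matrix.trace_mul_comm,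
    ← Matrix.mul_assoc]
  refine Finset.sum_nonneg fun k _ => ?_
  have h := hS.dotProduct_mulVec_nonneg (star (fun i => B k i))
  convert h using 1
  simp only [Matrix.mul_apply, Matrix.conjTranspose_apply, Matrix.diag, dotProduct, mulVec,
    Pi.star_apply, star_star, Finset.sum_mul, Finset.mul_sum]
  rw [Finset.sum_comm]
  exact Finset.sum_congr rfl fun i _ => Finset.sum_congr rfl fun j _ => by ring

lemma SMat_psd {n r : ℕ} (S : Matrix (Fin n) (Fin n) ℂ) (hSH : S.IsHermitian)
    (Yhat : Matrix (Fin n) (Fin r) ℂ) (z : Fin r → ℂ) (hz : z ≠ 0) (hYz : Yhat *ᵥ z = 0)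
    (hsecond : ∀ Ydot : Matrix (Fin n) (Fin r) ℂ,
      (∀ i, ((Ydot * Yhatᴴ) i i).re = 0) →
      0 ≤ ((Ydotᴴ * S * Ydot).trace).re) : S.PosSemidef := by
  refine .of_dotProduct_mulVec_nonneg hSH fun x => ?_
  set Ydot : Matrix (Fin n) (Fin r) ℂ := fun i j => x i * star (z j) with hYdot
  have hconstr : ∀ i, ((Ydot * Yhatᴴ) i i).re = 0 := by
    intro i
    have h1 : (Ydot * Yhatᴴ) i i = x i * star ((Yhat *ᵥ z) i) := by
      simp only [Matrix.mul_apply, Matrix.conjTranspose_apply]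
      simp only [Matrix.mul_apply, hYdot, Matrix.conjTranspose_apply, mulVec, dotProduct,
        star_sum, Finset.mul_sum, star_mul']
      exact Finset.sum_congr rfl fun j _ => by ring
    rw [h1, hYz]; simp
  have hq := hsecond Ydot hconstr
  set q : ℂ := star x ⬝ᵥ S *ᵥ x with hqdef
  have key : (Ydotᴴ * S * Ydot).trace = ((∑ k, normSq (z k) : ℝ) : ℂ) * q := by
    simp only [Matrix.trace, Matrix.diag, Matrix.mul_apply, Matrix.conjTranspose_apply]
    simp only [Matrix.trace, Matrix.diag, Matrix.mul_apply, hYdot, Matrix.conjTranspose_apply,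
      hqdef, dotProduct, mulVec, Pi.star_apply, star_mul', star_star, Complex.ofReal_sum,
      Finset.sum_mul, Finset.mul_sum]
    conv_lhs => rw [Finset.sum_comm]
    conv_lhs => enter [2, j]; rw [Finset.sum_comm]
    conv_lhs => rw [Finset.sum_comm]
    refine Finset.sum_congr rfl fun i _ => Finset.sum_congr rfl fun j _ =>
      Finset.sum_congr rfl fun k _ => ?_
    have hzk : (z k) * star (z k) = ((normSq (z k) : ℝ) : ℂ) := Complex.mul_conj _
    rw [← hzk]
    ring
  have him : q.im = 0 := by
    have h1 : star q = q := by
      rw [hqdef]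
      simp only [dotProduct, mulVec, star_sum, star_mul', star_star, Pi.star_apply,
        Finset.mul_sum]
      rw [Finset.sum_comm]
      refine Finset.sum_congr rfl fun i _ => Finset.sum_congr rfl fun j _ => ?_
      rw [← hSH.apply i j]
      ring
    have h2 := congrArg Complex.im h1
    simp only [Complex.star_def, Complex.conj_im] at h2
    linarith
  have hc : 0 < ∑ k, normSq (z k) := by
    obtain ⟨k, hk⟩ := Function.ne_iff.mp hz
    exact Finset.sum_pos' (fun k _ => normSq_nonneg _)
      ⟨k, Finset.mem_univ k, normSq_pos.mpr hk⟩
  rw [key] at hq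
  rw [Complex.nonneg_iff]
  constructor
  · have : ((((∑ k, normSq (z k) : ℝ)) : ℂ) * q).re = (∑ k, normSq (z k)) * q.re := by
      simp [Complex.mul_re, him]
    rw [this] at hq
    nlinarith
  · exact him.symm

/-- **Paper's Proposition 2.** If `Ŷ ∈ OB(r,n)` is rank-deficient and second-order
critical for `Y ↦ Re tr(M Y Yᴴ)` over `OB(r,n)` (`M` Hermitian), then `Ŷ` is a global
minimizer over `OB(r,n)` and `X̂ = Ŷ Ŷᴴ` is a global minimizer of (SDP). -/
theorem stmt5 {n r : ℕ} (M : Matrix (Fin n) (Fin n) ℂ) (hM : M.IsHermitian)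
    (Yhat : Matrix (Fin n) (Fin r) ℂ)
    (hOB : ∀ i, (Yhat * Yhatᴴ) i i = 1)
    (hrank : Yhat.rank < r)
    (hfirst : SMat M Yhat * Yhat = 0)
    (hsecond : ∀ Ydot : Matrix (Fin n) (Fin r) ℂ,
      (∀ i, ((Ydot * Yhatᴴ) i i).re = 0) →
      0 ≤ ((Ydotᴴ * SMat M Yhat * Ydot).trace).re) :
    (∀ Y : Matrix (Fin n) (Fin r) ℂ, (∀ i, (Y * Yᴴ) i i = 1) →
      ((M * (Yhat * Yhatᴴ)).trace).re ≤ ((M * (Y * Yᴴ)).trace).re) ∧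
    (Yhat * Yhatᴴ).PosSemidef ∧ (∀ i, (Yhat * Yhatᴴ) i i = 1) ∧
    (∀ X : Matrix (Fin n) (Fin n) ℂ, X.PosSemidef → (∀ i, X i i = 1) →
      ((M * (Yhat * Yhatᴴ)).trace).re ≤ ((M * X).trace).re) := by
  have hSH := SMat_isHermitian M hM Yhat
  obtain ⟨z, hz, hYz⟩ := exists_ker Yhat hrank
  have hSpsd : (SMat M Yhat).PosSemidef := SMat_psd _ hSH Yhat z hz hYz hsecond
  have hXhat : (Yhat * Yhatᴴ).PosSemidef := posSemidef_self_mul_conjTranspose Yhat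
  have key : ∀ X : Matrix (Fin n) (Fin n) ℂ, (∀ i, X i i = 1) →
      (M * X).trace = (SMat M Yhat * X).trace
        + ∑ i, ((((M * Yhat * Yhatᴴ) i i).re : ℂ)) := by
    intro X hX
    have hM' : M = SMat M Yhat
        + Matrix.diagonal (fun i => (((M * Yhat * Yhatᴴ) i i).re : ℂ)) := by
      simp [SMat]
    conv_lhs => rw [hM']
    rw [Matrix.add_mul, Matrix.trace_add]
    congr 1
    simp [Matrix.trace, Matrix.diag, Matrix.diagonal_mul, hX]
  have hzero : (SMat M Yhat * (Yhat * Yhatᴴ)).trace = 0 := by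
    rw [← Matrix.mul_assoc, hfirst, Matrix.zero_mul, Matrix.trace_zero]
  have hhat : (M * (Yhat * Yhatᴴ)).trace = ∑ i, ((((M * Yhat * Yhatᴴ) i i).re : ℂ)) := by
    rw [key _ hOB, hzero, zero_add]
  have main : ∀ X : Matrix (Fin n) (Fin n) ℂ, X.PosSemidef → (∀ i, X i i = 1) →
      ((M * (Yhat * Yhatᴴ)).trace).re ≤ ((M * X).trace).re := by
    intro X hX hdiag
    have h1 := trace_psd_nonneg hSpsd hX
    have h2 : 0 ≤ ((SMat M Yhat * X).trace).re := (Complex.nonneg_iff.mp h1).1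
    rw [hhat, key X hdiag]
    simp only [Complex.add_re]
    linarith
  exact ⟨fun Y hY => main _ (posSemidef_self_mul_conjTranspose Y) hY, hXhat, hOB, main⟩
end
end

section
/- Let M̄ ∈ ℂ^{n×n} be Hermitian positive semidefinite, z̄ ∈ ℂ₁ⁿ with M̄ z̄ = 0, and λ > 0 a constant such that Re(xᴴ M̄ x) ≥ λ ‖x‖² for every x ∈ ℂⁿ with z̄ᴴ x = 0. Let M̃ ∈ ℂ^{n×n} be Hermitian and let ẑ ∈ ℂ₁ⁿ be a global minimizer of z ↦ zᴴ M̃ z over ℂ₁ⁿ. Then d(z̄, ẑ) ≤ 2 √( n ‖M̃ − M̄‖₂ / λ ), where d(z̄, ẑ) = inf over θ ∈ ℝ of ‖ẑ − e^{iθ} z̄‖. (Paper's Proposition 6 / Proposition B.E.) -/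
open Matrix Complex
open scoped ComplexOrder Matrix.Norms.L2Operator

noncomputable section

/-- The Euclidean norm of a complex vector. -/
def enorm' {n : ℕ} (x : Fin n → ℂ) : ℝ :=
  Real.sqrt (∑ i, Complex.normSq (x i))

open scoped InnerProductSpace in
lemma quad_bound {n : ℕ} (A : Matrix (Fin n) (Fin n) ℂ) (v : Fin n → ℂ) :
    |(star v ⬝ᵥ A.mulVec v).re| ≤ ‖A‖ * ∑ i, Complex.normSq (v i) := by
  set x : EuclideanSpace ℂ (Fin n) := (WithLp.equiv 2 _).symm v with hx
  set y : EuclideanSpace ℂ (Fin n) := (WithLp.equiv 2 _).symm (A.mulVec v) with hy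
  have hnx : ‖x‖ = Real.sqrt (∑ i, Complex.normSq (v i)) := by
    rw [EuclideanSpace.norm_eq]
    congr 1
    refine Finset.sum_congr rfl fun i _ => ?_
    exact Complex.sq_norm _
  have h1 : (star v ⬝ᵥ A.mulVec v) = ⟪x, y⟫_ℂ := by
    rw [EuclideanSpace.inner_eq_star_dotProduct]; exact dotProduct_comm _ _
  calc |(star v ⬝ᵥ A.mulVec v).re| ≤ ‖star v ⬝ᵥ A.mulVec v‖ :=
        Complex.abs_re_le_norm _
    _ = ‖⟪x, y⟫_ℂ‖ := by rw [h1]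
    _ ≤ ‖x‖ * ‖y‖ := norm_inner_le_norm _ _
    _ ≤ ‖x‖ * (‖A‖ * ‖x‖) := by
        gcongr
        exact A.l2_opNorm_mulVec x
    _ = ‖A‖ * (‖x‖ * ‖x‖) := by ring
    _ = ‖A‖ * ∑ i, Complex.normSq (v i) := by
        rw [hnx, Real.mul_self_sqrt (Finset.sum_nonneg fun i _ => Complex.normSq_nonneg _)]

lemma sum_normSq_sub_smul {n : ℕ} (a b : Fin n → ℂ) (e : ℂ) :
    (∑ i, Complex.normSq (a i - e * b i) : ℝ) =
      (∑ i, Complex.normSq (a i)) - 2 * ((starRingEnd ℂ) e * (star b ⬝ᵥ a)).re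
        + Complex.normSq e * ∑ i, Complex.normSq (b i) := by
  have key : ∀ i, Complex.normSq (a i - e * b i)
      = Complex.normSq (a i) - 2 * ((starRingEnd ℂ) e * ((starRingEnd ℂ) (b i) * a i)).re
        + Complex.normSq e * Complex.normSq (b i) := by
    intro i
    have h2 : a i * (starRingEnd ℂ) (e * b i)
        = (starRingEnd ℂ) e * ((starRingEnd ℂ) (b i) * a i) := by
      rw [_root_.map_mul]; ring
    rw [Complex.normSq_sub, Complex.normSq_mul, h2]
    ring
  simp only [key, Finset.sum_add_distrib, Finset.sum_sub_distrib, ← Finset.mul_sum]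
  congr 2
  have h3 : (starRingEnd ℂ) e * (star b ⬝ᵥ a)
      = ∑ i, (starRingEnd ℂ) e * ((starRingEnd ℂ) (b i) * a i) := by
    rw [dotProduct, Finset.mul_sum]
    rfl
  rw [h3, Complex.re_sum, Finset.mul_sum]

/-- **Paper's Proposition 6 (Proposition B.E).** Let `M̄ ⪰ 0` with `M̄ z̄ = 0` for
`z̄ ∈ ℂ₁ⁿ`, and `λ > 0` with `Re(xᴴ M̄ x) ≥ λ ‖x‖²` for every `x ⟂ z̄`. If `ẑ ∈ ℂ₁ⁿ`
is a global minimizer of `z ↦ zᴴ M̃ z` over `ℂ₁ⁿ` (`M̃` Hermitian), then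
`d(z̄, ẑ) = inf_θ ‖ẑ − e^{iθ} z̄‖ ≤ 2 √(n ‖M̃ − M̄‖₂ / λ)`. -/
theorem stmt8 {n : ℕ} (Mbar Mt : Matrix (Fin n) (Fin n) ℂ)
    (hMbar : Mbar.PosSemidef) (hMt : Mt.IsHermitian)
    (zbar : Fin n → ℂ) (hzbar : ∀ i, ‖zbar i‖ = 1)
    (hker : Mbar.mulVec zbar = 0)
    (lam : ℝ) (hlam : 0 < lam)
    (hgap : ∀ x : Fin n → ℂ, star zbar ⬝ᵥ x = 0 →
      lam * (∑ i, Complex.normSq (x i)) ≤ (star x ⬝ᵥ Mbar.mulVec x).re)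
    (zhat : Fin n → ℂ) (hzhat : ∀ i, ‖zhat i‖ = 1)
    (hopt : ∀ z : Fin n → ℂ, (∀ i, ‖z i‖ = 1) →
      (star zhat ⬝ᵥ Mt.mulVec zhat).re ≤ (star z ⬝ᵥ Mt.mulVec z).re) :
    (⨅ θ : ℝ, enorm' (zhat - fun i => Complex.exp (θ * Complex.I) * zbar i)) ≤
      2 * Real.sqrt (n * ‖Mt - Mbar‖ / lam) := by
  have hbdd : BddBelow (Set.range fun θ : ℝ =>
      enorm' (zhat - fun i => Complex.exp (θ * Complex.I) * zbar i)) := by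
    refine ⟨0, ?_⟩
    rintro r ⟨θ, rfl⟩
    exact Real.sqrt_nonneg _
  rcases Nat.eq_zero_or_pos n with hn | hn
  · subst hn
    refine le_trans (ciInf_le hbdd 0) ?_
    have h0 : enorm' (zhat - fun i => Complex.exp ((0:ℝ) * Complex.I) * zbar i) = 0 := by
      simp [enorm']
    rw [h0]
    positivity
  -- main case
  set E := Mt - Mbar with hE
  have hEnn : (0:ℝ) ≤ ‖E‖ := norm_nonneg _
  have hn0 : (0:ℝ) < n := by exact_mod_cast hn
  have hnC : (n:ℂ) ≠ 0 := by exact_mod_cast hn.ne'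
  have hsq_zb : (∑ i, Complex.normSq (zbar i)) = (n:ℝ) := by
    simp [Complex.normSq_eq_norm_sq, hzbar]
  have hsq_zh : (∑ i, Complex.normSq (zhat i)) = (n:ℝ) := by
    simp [Complex.normSq_eq_norm_sq, hzhat]
  set c := star zbar ⬝ᵥ zhat with hc
  -- |c| ≤ n
  have habs_c : ‖c‖ ≤ (n:ℝ) := by
    calc ‖c‖ ≤ ∑ i, ‖star zbar i * zhat i‖ :=
          norm_sum_le _ _
      _ = ∑ i : Fin n, (1:ℝ) := by
          refine Finset.sum_congr rfl fun i _ => ?_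
          simp [_root_.map_mul, hzbar, hzhat]
      _ = n := by simp
  have hz : star zbar ⬝ᵥ zbar = (n:ℂ) := by
    have h1 : ∀ i, (starRingEnd ℂ) (zbar i) * zbar i = 1 := by
      intro i
      rw [mul_comm, Complex.mul_conj, Complex.normSq_eq_norm_sq, hzbar]
      norm_num
    simp [dotProduct, h1]
  -- main energy bound
  have key1 : (star zhat ⬝ᵥ Mbar.mulVec zhat).re ≤ 2 * (‖E‖ * n) := by
    have e1 : star zhat ⬝ᵥ Mbar.mulVec zhat
        = star zhat ⬝ᵥ Mt.mulVec zhat - star zhat ⬝ᵥ E.mulVec zhat := by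
      have h : Mbar = Mt - E := by rw [hE]; abel
      rw [h, Matrix.sub_mulVec, dotProduct_sub]
    have e2 : star zbar ⬝ᵥ Mt.mulVec zbar = star zbar ⬝ᵥ E.mulVec zbar := by
      have h : Mt = E + Mbar := by rw [hE]; abel
      rw [h, Matrix.add_mulVec, dotProduct_add, hker, dotProduct_zero, add_zero]
    have b1 := quad_bound E zhat
    rw [hsq_zh] at b1
    have b2 := quad_bound E zbar
    rw [hsq_zb] at b2
    have hopt' := hopt zbar hzbar
    have r1 : (star zhat ⬝ᵥ Mbar.mulVec zhat).re
        = (star zhat ⬝ᵥ Mt.mulVec zhat).re - (star zhat ⬝ᵥ E.mulVec zhat).re := by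
      rw [e1, Complex.sub_re]
    have r2 : (star zbar ⬝ᵥ Mt.mulVec zbar).re = (star zbar ⬝ᵥ E.mulVec zbar).re := by
      rw [e2]
    rw [r1]
    rw [r2] at hopt'
    have hb1 := abs_le.mp b1
    have hb2 := abs_le.mp b2
    linarith [hb1.1, hb1.2, hb2.1, hb2.2]
  -- the perpendicular component
  set x : Fin n → ℂ := fun i => zhat i - (c / n) * zbar i with hxdef
  have horth : star zbar ⬝ᵥ x = 0 := by
    have h1 : star zbar ⬝ᵥ x = c - (c / n) * (star zbar ⬝ᵥ zbar) := by
      simp only [hxdef, dotProduct, hc, Finset.mul_sum, mul_sub, ← Finset.sum_sub_distrib]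
      exact Finset.sum_congr rfl fun i _ => by ring
    rw [h1, hz]
    field_simp
    ring
  have hxeq : x = zhat - (c / n) • zbar := rfl
  have hquad : star x ⬝ᵥ Mbar.mulVec x = star zhat ⬝ᵥ Mbar.mulVec zhat := by
    have hmv : Mbar.mulVec x = Mbar.mulVec zhat := by
      rw [hxeq, Matrix.mulVec_sub, Matrix.mulVec_smul, hker, smul_zero, sub_zero]
    have hvm : star zbar ᵥ* Mbar = 0 := by
      have h := congrArg star hker
      rw [Matrix.star_mulVec, hMbar.isHermitian.eq] at h
      simpa using h
    have hvec0 : star zbar ⬝ᵥ Mbar.mulVec zhat = 0 := by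
      rw [Matrix.dotProduct_mulVec, hvm, zero_dotProduct]
    rw [hmv, hxeq, star_sub, star_smul, sub_dotProduct, smul_dotProduct,
      hvec0, smul_zero, sub_zero]
  -- norm of x
  have hS : (∑ i, Complex.normSq (x i)) = n - Complex.normSq c / n := by
    have h1 := sum_normSq_sub_smul zhat zbar (c / n)
    have h4 : ((starRingEnd ℂ) (c / (n:ℂ)) * c).re = Complex.normSq c / n := by
      rw [map_div₀, map_natCast, div_mul_eq_mul_div, mul_comm ((starRingEnd ℂ) c) c,
        Complex.mul_conj]
      rw [show ((n:ℂ)) = (((n:ℝ)):ℂ) by push_cast; ring, ← Complex.ofReal_div,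
        Complex.ofReal_re]
    have h5 : Complex.normSq (c / (n:ℂ)) = Complex.normSq c / (n:ℝ) ^ 2 := by
      rw [Complex.normSq_div, Complex.normSq_natCast]
      ring
    rw [← hc] at h1
    rw [hxdef, h1, hsq_zh, hsq_zb, h4, h5]
    field_simp
    ring
  -- energy inequality
  have henergy : (n:ℝ) - Complex.normSq c / n ≤ 2 * (‖E‖ * n) / lam := by
    have h1 := hgap x horth
    rw [hS, hquad] at h1
    rw [le_div_iff₀ hlam]
    calc ((n:ℝ) - Complex.normSq c / n) * lam
        = lam * ((n:ℝ) - Complex.normSq c / n) := by ring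
      _ ≤ (star zhat ⬝ᵥ Mbar.mulVec zhat).re := h1
      _ ≤ 2 * (‖E‖ * n) := key1
  -- choose the optimal phase
  set θ := c.arg with hθ
  set e : ℂ := Complex.exp ((θ:ℝ) * Complex.I) with he
  have hnse : Complex.normSq e = 1 := by
    rw [Complex.normSq_eq_norm_sq, Complex.norm_exp_ofReal_mul_I]
    norm_num
  have hce : ((starRingEnd ℂ) e * c).re = ‖c‖ := by
    have h1 : (starRingEnd ℂ) e * c = ((‖c‖ : ℝ) : ℂ) := by
      conv_lhs => rw [← Complex.norm_mul_exp_arg_mul_I c]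
      have h2 : Complex.exp ((c.arg : ℝ) * Complex.I) = e := rfl
      rw [h2]
      calc (starRingEnd ℂ) e * ((‖c‖ : ℝ) * e)
          = ((‖c‖ : ℝ) : ℂ) * (e * (starRingEnd ℂ) e) := by ring
        _ = ((‖c‖ : ℝ) : ℂ) := by
            rw [Complex.mul_conj, hnse]
            norm_num
    rw [h1, Complex.ofReal_re]
  have hval : (∑ i, Complex.normSq (zhat i - e * zbar i))
      = 2 * n - 2 * ‖c‖ := by
    rw [sum_normSq_sub_smul, hsq_zh, hsq_zb, ← hc, hce, hnse]
    ring
  refine le_trans (ciInf_le hbdd θ) ?_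
  have hfe : enorm' (zhat - fun i => Complex.exp ((θ:ℝ) * Complex.I) * zbar i)
      = Real.sqrt (2 * n - 2 * ‖c‖) := by
    rw [enorm', ← hval]
    congr 1
  rw [hfe]
  -- final numeric computation
  have hsqc : Complex.normSq c = (‖c‖) ^ 2 := (Complex.sq_norm c).symm
  have habsnn : (0:ℝ) ≤ ‖c‖ := norm_nonneg c
  have step1 : 2 * (n:ℝ) - 2 * ‖c‖
      ≤ 2 * ((n:ℝ) - Complex.normSq c / n) := by
    have h2 : Complex.normSq c / n ≤ ‖c‖ := by
      rw [div_le_iff₀ hn0, hsqc]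
      nlinarith [habs_c]
    linarith
  have step2 : 2 * ((n:ℝ) - Complex.normSq c / n) ≤ 4 * ((n:ℝ) * ‖E‖ / lam) := by
    calc 2 * ((n:ℝ) - Complex.normSq c / n) ≤ 2 * (2 * (‖E‖ * n) / lam) := by
          linarith [henergy]
      _ = 4 * ((n:ℝ) * ‖E‖ / lam) := by ring
  calc Real.sqrt (2 * n - 2 * ‖c‖)
      ≤ Real.sqrt (4 * ((n:ℝ) * ‖E‖ / lam)) := Real.sqrt_le_sqrt (by linarith)
    _ = 2 * Real.sqrt ((n:ℝ) * ‖E‖ / lam) := by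
        rw [Real.sqrt_mul (by norm_num : (0:ℝ) ≤ 4)]
        congr 1
        rw [show (4:ℝ) = 2 ^ 2 by norm_num]
        exact Real.sqrt_sq (by norm_num)
end
end

section
/- Let M̄, M̃ ∈ ℂ^{n×n} be Hermitian with M̄ z̄ = 0 for some z̄ ∈ ℂ₁ⁿ, and let ẑ ∈ ℂ₁ⁿ be a global minimizer of z ↦ zᴴ M̃ z over ℂ₁ⁿ. Then ẑᴴ M̄ ẑ ≤ 2n ‖M̃ − M̄‖₂. -/
open Matrix Complex
open scoped Matrix.Norms.L2Operator

private lemma quad_abs_le {n : ℕ} (A : Matrix (Fin n) (Fin n) ℂ) (z : Fin n → ℂ)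
    (hz : ∀ i, ‖z i‖ = 1) :
    ‖(star z ⬝ᵥ A.mulVec z : ℂ)‖ ≤ n * ‖A‖ := by
  set x : EuclideanSpace ℂ (Fin n) := (WithLp.equiv 2 (Fin n → ℂ)).symm z with hxdef
  have hx : ‖x‖ = Real.sqrt n := by
    rw [EuclideanSpace.norm_eq]
    congr 1
    simp only [hxdef, WithLp.equiv_symm_apply, PiLp.toLp_apply]
    simp [hz]
  have h1 := norm_inner_le_norm (𝕜 := ℂ) x ((WithLp.equiv 2 (Fin n → ℂ)).symm (A.mulVec z))
  rw [EuclideanSpace.inner_eq_star_dotProduct, dotProduct_comm] at h1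
  have h2 : ‖(WithLp.equiv 2 (Fin n → ℂ)).symm (A.mulVec z)‖ ≤ ‖A‖ * ‖x‖ :=
    by exact A.l2_opNorm_mulVec x
  have hA : (0:ℝ) ≤ ‖A‖ := norm_nonneg _
  calc ‖(star z ⬝ᵥ A.mulVec z : ℂ)‖
      ≤ ‖x‖ * ‖(WithLp.equiv 2 (Fin n → ℂ)).symm (A.mulVec z)‖ := h1
    _ ≤ ‖x‖ * (‖A‖ * ‖x‖) := by
        exact mul_le_mul_of_nonneg_left h2 (norm_nonneg _)
    _ = ‖A‖ * (Real.sqrt n * Real.sqrt n) := by rw [hx]; ring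
    _ = n * ‖A‖ := by
        rw [Real.mul_self_sqrt (by positivity)]; ring

/-- If `M̄ z̄ = 0` for some `z̄ ∈ ℂ₁ⁿ` (`M̄, M̃` Hermitian) and `ẑ ∈ ℂ₁ⁿ` is a global
minimizer of `z ↦ zᴴ M̃ z` over `ℂ₁ⁿ`, then `ẑᴴ M̄ ẑ ≤ 2n ‖M̃ − M̄‖₂`. -/
theorem stmt12 {n : ℕ} (Mbar Mt : Matrix (Fin n) (Fin n) ℂ)
    (hMbar : Mbar.IsHermitian) (hMt : Mt.IsHermitian)
    (zbar : Fin n → ℂ) (hzbar : ∀ i, ‖zbar i‖ = 1)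
    (hker : Mbar.mulVec zbar = 0)
    (zhat : Fin n → ℂ) (hzhat : ∀ i, ‖zhat i‖ = 1)
    (hopt : ∀ z : Fin n → ℂ, (∀ i, ‖z i‖ = 1) →
      (star zhat ⬝ᵥ Mt.mulVec zhat).re ≤ (star z ⬝ᵥ Mt.mulVec z).re) :
    (star zhat ⬝ᵥ Mbar.mulVec zhat).re ≤ 2 * n * ‖Mt - Mbar‖ := by
  set Δ := Mt - Mbar with hΔ
  have hsub : ∀ z : Fin n → ℂ, Mt.mulVec z = Mbar.mulVec z + Δ.mulVec z := by
    intro z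
    rw [hΔ, Matrix.sub_mulVec]
    ring_nf
  have hbar0 : star zbar ⬝ᵥ Mbar.mulVec zbar = 0 := by
    rw [hker]; simp
  have h1 : (star zhat ⬝ᵥ Mt.mulVec zhat).re ≤ (star zbar ⬝ᵥ Mt.mulVec zbar).re :=
    hopt zbar hzbar
  have h2 : star zbar ⬝ᵥ Mt.mulVec zbar = star zbar ⬝ᵥ Δ.mulVec zbar := by
    rw [hsub, dotProduct_add, hbar0, zero_add]
  have h3 : star zhat ⬝ᵥ Mbar.mulVec zhat
      = star zhat ⬝ᵥ Mt.mulVec zhat - star zhat ⬝ᵥ Δ.mulVec zhat := by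
    rw [hsub, dotProduct_add]; ring
  have hb1 : ‖(star zbar ⬝ᵥ Δ.mulVec zbar : ℂ)‖ ≤ n * ‖Δ‖ := quad_abs_le Δ zbar hzbar
  have hb2 : ‖(star zhat ⬝ᵥ Δ.mulVec zhat : ℂ)‖ ≤ n * ‖Δ‖ := quad_abs_le Δ zhat hzhat
  have hr1 : (star zbar ⬝ᵥ Δ.mulVec zbar).re ≤ n * ‖Δ‖ :=
    le_trans (le_trans (le_abs_self _) (Complex.abs_re_le_norm _)) hb1
  have hr2 : -(star zhat ⬝ᵥ Δ.mulVec zhat).re ≤ n * ‖Δ‖ :=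
    le_trans (le_trans (neg_le_abs _) (Complex.abs_re_le_norm _)) hb2
  calc (star zhat ⬝ᵥ Mbar.mulVec zhat).re
      = (star zhat ⬝ᵥ Mt.mulVec zhat).re - (star zhat ⬝ᵥ Δ.mulVec zhat).re := by
        rw [h3, Complex.sub_re]
    _ ≤ (star zbar ⬝ᵥ Mt.mulVec zbar).re - (star zhat ⬝ᵥ Δ.mulVec zhat).re := by
        linarith
    _ = (star zbar ⬝ᵥ Δ.mulVec zbar).re + -(star zhat ⬝ᵥ Δ.mulVec zhat).re := by
        rw [h2]; ring
    _ ≤ n * ‖Δ‖ + n * ‖Δ‖ := add_le_add hr1 hr2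
    _ = 2 * n * ‖Mt - Mbar‖ := by rw [← hΔ]; ring
end

section
/- Let M̄ ∈ ℂ^{n×n} be Hermitian positive semidefinite, z̄ ∈ ℂ₁ⁿ with M̄ z̄ = 0, and λ ≥ 0 such that Re(xᴴ M̄ x) ≥ λ ‖x‖² for every x ∈ ℂⁿ with z̄ᴴ x = 0. Then for every ẑ ∈ ℂ₁ⁿ, one has ẑᴴ M̄ ẑ ≥ λ ( n − |z̄ᴴ ẑ| ). -/
open Matrix Complex
open scoped ComplexOrder

/-- If `M̄ ⪰ 0`, `M̄ z̄ = 0` for `z̄ ∈ ℂ₁ⁿ`, and `λ ≥ 0` satisfies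
`Re(xᴴ M̄ x) ≥ λ ‖x‖²` for all `x ⟂ z̄`, then for every `ẑ ∈ ℂ₁ⁿ`,
`ẑᴴ M̄ ẑ ≥ λ (n − |z̄ᴴ ẑ|)`. -/
theorem stmt13 {n : ℕ} (Mbar : Matrix (Fin n) (Fin n) ℂ)
    (hMbar : Mbar.PosSemidef)
    (zbar : Fin n → ℂ) (hzbar : ∀ i, ‖zbar i‖ = 1)
    (hker : Mbar.mulVec zbar = 0)
    (lam : ℝ) (hlam : 0 ≤ lam)
    (hgap : ∀ x : Fin n → ℂ, star zbar ⬝ᵥ x = 0 →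
      lam * (∑ i, Complex.normSq (x i)) ≤ (star x ⬝ᵥ Mbar.mulVec x).re) :
    ∀ zhat : Fin n → ℂ, (∀ i, ‖zhat i‖ = 1) →
      lam * ((n : ℝ) - ‖star zbar ⬝ᵥ zhat‖) ≤
        (star zhat ⬝ᵥ Mbar.mulVec zhat).re := by
  intro zhat hzhat
  rcases Nat.eq_zero_or_pos n with h0 | hn
  · subst h0
    simp [dotProduct]
  have hnpos : (0:ℝ) < n := by exact_mod_cast hn
  have hnC : (n:ℂ) ≠ 0 := by exact_mod_cast hnpos.ne'
  set c : ℂ := star zbar ⬝ᵥ zhat with hc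
  set α : ℂ := c / n with hα
  set x : Fin n → ℂ := zhat - α • zbar with hxdef
  -- basic norms
  have hzbar2 : ∀ i, (starRingEnd ℂ) (zbar i) * zbar i = 1 := by
    intro i
    have := Complex.normSq_eq_norm_sq (zbar i)
    rw [hzbar i] at this
    have h2 : Complex.normSq (zbar i) = 1 := by rw [this]; norm_num
    calc (starRingEnd ℂ) (zbar i) * zbar i = (Complex.normSq (zbar i) : ℂ) := by
          rw [Complex.normSq_eq_conj_mul_self]
      _ = 1 := by rw [h2]; norm_num
  have hzhat2 : ∀ i, (starRingEnd ℂ) (zhat i) * zhat i = 1 := by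
    intro i
    have := Complex.normSq_eq_norm_sq (zhat i)
    rw [hzhat i] at this
    have h2 : Complex.normSq (zhat i) = 1 := by rw [this]; norm_num
    calc (starRingEnd ℂ) (zhat i) * zhat i = (Complex.normSq (zhat i) : ℂ) := by
          rw [Complex.normSq_eq_conj_mul_self]
      _ = 1 := by rw [h2]; norm_num
  have hbb : star zbar ⬝ᵥ zbar = (n:ℂ) := by
    simp [dotProduct, Pi.star_apply, hzbar2]
  have hhh : star zhat ⬝ᵥ zhat = (n:ℂ) := by
    simp [dotProduct, Pi.star_apply, hzhat2]
  have hhb : star zhat ⬝ᵥ zbar = (starRingEnd ℂ) c := by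
    simp [hc, dotProduct, map_sum, mul_comm]
  -- orthogonality
  have hx : star zbar ⬝ᵥ x = 0 := by
    rw [hxdef, dotProduct_sub, dotProduct_smul, hbb, ← hc, hα, smul_eq_mul]
    field_simp
    ring
  -- Mx = Mzhat
  have hMx : Mbar.mulVec x = Mbar.mulVec zhat := by
    rw [hxdef, mulVec_sub, Matrix.mulVec_smul, hker, smul_zero, sub_zero]
  -- z̄ᴴ M ẑ = 0
  have hzM : star zbar ⬝ᵥ Mbar.mulVec zhat = 0 := by
    rw [dotProduct_mulVec]
    have : star zbar ᵥ* Mbar = star (Mbar *ᵥ zbar) := by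
      rw [star_mulVec, hMbar.1]
    rw [this, hker]
    simp
  have hquad : star x ⬝ᵥ Mbar.mulVec x = star zhat ⬝ᵥ Mbar.mulVec zhat := by
    rw [hMx, hxdef, star_sub, star_smul, sub_dotProduct, smul_dotProduct, hzM]
    simp
  -- norm of x
  have hxx : star x ⬝ᵥ x = ((n : ℝ) - ‖c‖ ^ 2 / n : ℝ) := by
    rw [hxdef, star_sub, star_smul, sub_dotProduct, smul_dotProduct,
      dotProduct_sub, dotProduct_sub, dotProduct_smul, dotProduct_smul,
      hhh, hbb, hhb, ← hc]
    have habs : ((‖c‖ : ℂ))^2 = (starRingEnd ℂ) c * c := by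
      rw [← Complex.normSq_eq_conj_mul_self]
      norm_cast
      exact Complex.sq_norm c
    simp only [smul_eq_mul, RCLike.star_def, hα]
    push_cast [habs]
    field_simp
    ring
  have hsum : (∑ i, Complex.normSq (x i)) = (n : ℝ) - ‖c‖ ^ 2 / n := by
    have : (star x ⬝ᵥ x) = (∑ i, (Complex.normSq (x i) : ℂ)) := by
      simp [dotProduct, Pi.star_apply, Complex.normSq_eq_conj_mul_self]
    rw [this] at hxx
    have := congrArg Complex.re hxx
    simpa [← Complex.ofReal_pow] using this
  -- |c| ≤ n
  have hcle : ‖c‖ ≤ n := by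
    calc ‖c‖ ≤ ∑ i, ‖(starRingEnd ℂ) (zbar i) * zhat i‖ := by
          simpa [hc, dotProduct, Pi.star_apply] using
            norm_sum_le Finset.univ (fun i => (starRingEnd ℂ) (zbar i) * zhat i)
      _ = (n : ℝ) := by simp [_root_.map_mul, hzbar, hzhat]
  have hkey : ‖c‖ ^ 2 / n ≤ ‖c‖ := by
    rw [div_le_iff₀ hnpos, pow_two]
    exact mul_le_mul_of_nonneg_left hcle (norm_nonneg c)
  calc lam * ((n : ℝ) - ‖c‖)
      ≤ lam * ((n : ℝ) - ‖c‖ ^ 2 / n) := by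
        apply mul_le_mul_of_nonneg_left _ hlam
        linarith
    _ = lam * (∑ i, Complex.normSq (x i)) := by rw [hsum]
    _ ≤ (star x ⬝ᵥ Mbar.mulVec x).re := hgap x hx
    _ = (star zhat ⬝ᵥ Mbar.mulVec zhat).re := by rw [hquad]
end
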